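/- arXiv:1912.08327 — 5 statements merged into one kernel-verified Lean document; each statement's English description precedes it below -/
import Mathlib

section
/- Let G be a finite connected simple graph on vertex set V, let λ be an eigenvalue of the Laplacian matrix L = D − A with eigenvector φ : V → ℝ, and let s, t ∈ V. Let (X_j)_{j≥0} be the simple random walk on G started at X₀ = s (at each step, the walk moves to a uniformly random neighbor of the current vertex), and let τ = inf{ j ≥ 0 : X_j = t } be the first hitting time of t, which is almost surely finite. Then the expected payoff of the game satisfies E[ Σ_{j=0}^{τ−1} λ · φ(X_j) / deg(X_j) ] = φ(s) − φ(t). -/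
open Matrix

/-- `(l, φ)` is an eigenpair of the (combinatorial) graph Laplacian `L = D - A`. -/
def SimpleGraph.IsLapEigenpair {V : Type*} [Fintype V] [DecidableEq V]
    (G : SimpleGraph V) [DecidableRel G.Adj] (l : ℝ) (φ : V → ℝ) : Prop :=
  φ ≠ 0 ∧ G.lapMatrix ℝ *ᵥ φ = l • φ

/-- `l` is the second-smallest eigenvalue `λ₂(G)` of the Laplacian of a connected graph,
i.e. its smallest positive eigenvalue. -/
def SimpleGraph.IsSecondLapEigenvalue {V : Type*} [Fintype V] [DecidableEq V]
    (G : SimpleGraph V) [DecidableRel G.Adj] (l : ℝ) : Prop :=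
  (∃ φ, G.IsLapEigenpair l φ) ∧ 0 < l ∧
    ∀ μ : ℝ, 0 < μ → (∃ ψ, G.IsLapEigenpair μ ψ) → l ≤ μ

open MeasureTheory

set_option linter.unusedSectionVars false

namespace ExpectedPayoffAux

variable {V : Type*} [Fintype V] [DecidableEq V] [MeasurableSpace V] [MeasurableSingletonClass V]
variable {Ω : Type*} [MeasurableSpace Ω]

/-- cylinder event: the walk follows `y` on `[0, n]`. -/
def cyl (X : ℕ → Ω → V) (n : ℕ) (y : Fin (n+1) → V) : Set Ω :=
  {ω | ∀ j : Fin (n+1), X j ω = y j}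

lemma measurableSet_cyl (X : ℕ → Ω → V) (hX : ∀ n, Measurable (X n)) (n : ℕ)
    (y : Fin (n+1) → V) : MeasurableSet (cyl X n y) := by
  have : cyl X n y = ⋂ j : Fin (n+1), (X j) ⁻¹' {y j} := by
    ext ω; simp [cyl]
  rw [this]
  exact MeasurableSet.iInter fun j => (hX j) (measurableSet_singleton _)

lemma cyl_eq_natCond (X : ℕ → Ω → V) (n : ℕ) (w : ℕ → V) :
    {ω | ∀ j ≤ n, X j ω = w j} = cyl X n (fun j => w j) := by
  ext ω
  constructor
  · intro h j
    exact h j (Nat.lt_succ_iff.mp j.isLt)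
  · intro h j hj
    exact h ⟨j, Nat.lt_succ_of_le hj⟩

lemma cyl_disjoint (X : ℕ → Ω → V) (n : ℕ) :
    Set.univ.PairwiseDisjoint (fun y : Fin (n+1) → V => cyl X n y) := by
  intro y _ y' _ hne
  refine Set.disjoint_left.2 fun ω hy hy' => hne ?_
  funext j
  rw [← hy j, ← hy' j]

variable (P : Measure Ω) (X : ℕ → Ω → V) (p : V → V → ENNReal)

/-- one-step transition for cylinder events -/
lemma cyl_step
    (hstep : ∀ (n : ℕ) (w : ℕ → V),
      P {ω | ∀ j ≤ n + 1, X j ω = w j} =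
        P {ω | ∀ j ≤ n, X j ω = w j} * p (w n) (w (n+1)))
    (n : ℕ) (y : Fin (n+1) → V) (v : V) :
    P (cyl X n y ∩ X (n+1) ⁻¹' {v}) = P (cyl X n y) * p (y (Fin.last n)) v := by
  classical
  set w : ℕ → V := fun j => if h : j < n+1 then y ⟨j, h⟩ else v with hw
  have h := hstep n w
  have hy : (fun j : Fin (n+1) => w (j : ℕ)) = y := by
    funext j; simp [hw, j.isLt, Nat.not_lt.mpr j.is_le]
  have h1 : {ω | ∀ j ≤ n + 1, X j ω = w j} = cyl X n y ∩ X (n+1) ⁻¹' {v} := by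
    ext ω
    constructor
    · intro h
      refine ⟨?_, ?_⟩
      · rw [← hy]; intro j; exact h j ((Nat.lt_succ_iff.mp j.isLt).trans (Nat.le_succ n))
      · have := h (n+1) le_rfl
        simpa [hw] using this
    · rintro ⟨h1, h2⟩ j hj
      rcases Nat.lt_succ_iff_lt_or_eq.mp (Nat.lt_succ_of_le hj) with hj' | hj'
      · have hj'' : j ≤ n := Nat.lt_succ_iff.mp hj'
        rw [← hy] at h1
        exact h1 ⟨j, Nat.lt_succ_of_le hj''⟩
      · subst hj'
        simpa [hw] using h2
  have h2 : {ω | ∀ j ≤ n, X j ω = w j} = cyl X n y := by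
    rw [cyl_eq_natCond, hy]
  have h3 : w n = y (Fin.last n) := by
    simp [hw, Nat.lt_succ_self, Fin.last]
  have h4 : w (n+1) = v := by simp [hw]
  rw [h1, h2, h3, h4] at h
  exact h

/-- multi-step transition probability -/
lemma multistep
    (hstep : ∀ (n : ℕ) (w : ℕ → V),
      P {ω | ∀ j ≤ n + 1, X j ω = w j} =
        P {ω | ∀ j ≤ n, X j ω = w j} * p (w n) (w (n+1)))
    (w : ℕ → V) (n : ℕ) : ∀ L : ℕ,
    P {ω | ∀ j ≤ n + L, X j ω = w j} =
      P {ω | ∀ j ≤ n, X j ω = w j} * ∏ i ∈ Finset.range L, p (w (n+i)) (w (n+i+1)) := by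
  intro L
  induction L with
  | zero => simp
  | succ L ih =>
      have : n + (L + 1) = (n + L) + 1 := by ring
      rw [this, hstep (n + L) w, ih, Finset.prod_range_succ, mul_assoc]

/-- measure of union of cylinders intersected with a common measurable set -/
lemma measure_biUnion_cyl (hX : ∀ n, Measurable (X n)) (n : ℕ)
    (B : Finset (Fin (n+1) → V)) (S : Set Ω) (hS : MeasurableSet S) :
    P (⋃ y ∈ B, (cyl X n y ∩ S)) = ∑ y ∈ B, P (cyl X n y ∩ S) := by
  refine measure_biUnion_finset ?_ (fun y _ => (measurableSet_cyl X hX n y).inter hS)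
  intro y _ y' _ hne
  exact Disjoint.mono Set.inter_subset_left Set.inter_subset_left
    (cyl_disjoint X n (Set.mem_univ y) (Set.mem_univ y') hne)

/-- integral of an indicator times a function of `X k` -/
lemma integral_indicator_comp [IsProbabilityMeasure P]
    (hX : ∀ n, Measurable (X n)) (A : Set Ω) (hA : MeasurableSet A) (k : ℕ) (h : V → ℝ) :
    ∫ ω, A.indicator (fun ω => h (X k ω)) ω ∂P
      = ∑ v : V, h v * (P (A ∩ X k ⁻¹' {v})).toReal := by
  have hrw : ∀ ω, A.indicator (fun ω => h (X k ω)) ω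
      = ∑ v : V, (A ∩ X k ⁻¹' {v}).indicator (fun _ => h v) ω := by
    intro ω
    by_cases hω : ω ∈ A
    · rw [Set.indicator_of_mem hω]
      rw [Finset.sum_eq_single (X k ω)]
      · exact (Set.indicator_of_mem (show ω ∈ A ∩ X k ⁻¹' {X k ω} from ⟨hω, rfl⟩)
          fun _ => h (X k ω)).symm
      · intro v _ hv
        exact Set.indicator_of_notMem (fun hc => hv hc.2.symm) _
      · intro hc; exact absurd (Finset.mem_univ _) hc
    · rw [Set.indicator_of_notMem hω]
      rw [Finset.sum_eq_zero]
      intro v _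
      exact Set.indicator_of_notMem (fun hc => hω hc.1) _
  rw [integral_congr_ae (Filter.Eventually.of_forall hrw)]
  rw [integral_finset_sum]
  · congr 1
    ext v
    rw [integral_indicator_const _ (hA.inter ((hX k) (measurableSet_singleton v)))]
    rw [smul_eq_mul, mul_comm]
    rfl
  · intro v _
    exact (integrable_const (h v)).indicator (hA.inter ((hX k) (measurableSet_singleton v)))

end ExpectedPayoffAux


open ExpectedPayoffAux Filter

set_option linter.unusedSectionVars false
set_option maxHeartbeats 1000000 in
/-- Theorem 1 (representation formula): let `G` be a finite connected graph, `(l, φ)` an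
eigenpair of the Laplacian `L = D - A`, and `s, t` two vertices. Let `(X j)` be the simple
random walk on `G` started at `s` (from a vertex, it jumps to a uniformly chosen neighbor)
and let `τ` be the (almost surely finite) first hitting time of `t`. Then the expected
payoff of the game, `E[Σ_{j<τ} l·φ(X j)/deg(X j)]`, equals `φ s - φ t`. -/
theorem expected_payoff_eq {V : Type*} [Fintype V] [DecidableEq V]
    [MeasurableSpace V] [MeasurableSingletonClass V]
    (G : SimpleGraph V) [DecidableRel G.Adj] (hconn : G.Connected)
    (l : ℝ) (φ : V → ℝ) (hpair : G.IsLapEigenpair l φ) (s t : V)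
    {Ω : Type*} [MeasurableSpace Ω] (P : Measure Ω) [IsProbabilityMeasure P]
    (X : ℕ → Ω → V) (hX : ∀ n, Measurable (X n))
    -- the walk starts at `s`
    (h0 : ∀ᵐ ω ∂P, X 0 ω = s)
    -- at each step, the walk jumps to a uniformly chosen random neighbor
    (hstep : ∀ (n : ℕ) (w : ℕ → V),
      P {ω | ∀ j ≤ n + 1, X j ω = w j} =
        P {ω | ∀ j ≤ n, X j ω = w j} *
          (if G.Adj (w n) (w (n + 1)) then ((G.degree (w n) : ENNReal))⁻¹ else 0))
    -- `τ` is the first hitting time of `t`, which is almost surely finite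
    (τ : Ω → ℕ) (hτmeas : Measurable τ)
    (hτ : ∀ᵐ ω ∂P, X (τ ω) ω = t ∧ ∀ j < τ ω, X j ω ≠ t) :
    ∫ ω, (∑ j ∈ Finset.range (τ ω), l * φ (X j ω) / (G.degree (X j ω) : ℝ)) ∂P
      = φ s - φ t := by
  classical
  rcases subsingleton_or_nontrivial V with hV | hV
  · -- degenerate case: a single vertex
    have hst : s = t := Subsingleton.elim s t
    have hτ0 : ∀ᵐ ω ∂P, τ ω = 0 := by
      filter_upwards [hτ] with ω hω
      by_contra hne
      exact hω.2 0 (Nat.pos_of_ne_zero hne) (Subsingleton.elim _ _)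
    have hz : ∫ ω, (∑ j ∈ Finset.range (τ ω), l * φ (X j ω) / (G.degree (X j ω) : ℝ)) ∂P
        = ∫ _ω, (0:ℝ) ∂P := by
      refine integral_congr_ae ?_
      filter_upwards [hτ0] with ω hω
      rw [hω]
      simp
    rw [hz, hst, sub_self, integral_zero]
  -- main case: at least two vertices
  have hdeg : ∀ v, 0 < G.degree v := by
    intro v
    obtain ⟨u, hu⟩ := exists_ne v
    obtain ⟨w⟩ := hconn.preconnected v u
    have hlen : 0 < w.length := by
      rcases Nat.eq_zero_or_pos w.length with h | h
      · exact absurd (w.eq_of_length_eq_zero h).symm hu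
      · exact h
    have adj := w.adj_getVert_succ hlen
    rw [w.getVert_zero] at adj
    exact (G.degree_pos_iff_exists_adj v).mpr ⟨_, adj⟩
  set N : ℕ := Fintype.card V with hN
  have hNpos : 0 < N := by rw [hN]; exact Fintype.card_pos
  haveI : NeZero N := ⟨hNpos.ne'⟩
  set p : V → V → ENNReal :=
    fun u v => if G.Adj u v then ((G.degree u : ENNReal))⁻¹ else 0 with hp
  have hstep' : ∀ (n : ℕ) (w : ℕ → V),
      P {ω | ∀ j ≤ n + 1, X j ω = w j} =
        P {ω | ∀ j ≤ n, X j ω = w j} * p (w n) (w (n+1)) := fun n w => hstep n w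
  have hptop : ∀ u v, p u v ≠ ⊤ := by
    intro u v
    rw [hp]
    dsimp only
    split
    · exact ENNReal.inv_ne_top.2 (by exact_mod_cast (hdeg u).ne')
    · exact ENNReal.zero_ne_top
  set f : V → ℝ := fun v => l * φ v / (G.degree v : ℝ) with hf
  have hPφ : ∀ u, ∑ v, (p u v).toReal * φ v = φ u - f u := by
    intro u
    have hd0 : (G.degree u : ℝ) ≠ 0 := Nat.cast_ne_zero.2 (hdeg u).ne'
    have hlap := congrFun hpair.2 u
    have hexp : (G.lapMatrix ℝ *ᵥ φ) u
        = (G.degree u : ℝ) * φ u - ∑ v ∈ G.neighborFinset u, φ v := by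
      simp [SimpleGraph.lapMatrix, sub_mulVec, mulVec_diagonal, SimpleGraph.degMatrix,
        SimpleGraph.adjMatrix_mulVec_apply]
    rw [hexp] at hlap
    have hlφ : (l • φ) u = l * φ u := rfl
    rw [hlφ] at hlap
    have hsum : ∑ v ∈ G.neighborFinset u, φ v = (G.degree u : ℝ) * φ u - l * φ u := by
      linarith
    have h1 : ∀ v, (p u v).toReal * φ v
        = if G.Adj u v then (G.degree u : ℝ)⁻¹ * φ v else 0 := by
      intro v
      by_cases h : G.Adj u v <;> simp [hp, h]
    rw [Finset.sum_congr rfl (fun v _ => h1 v)]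
    rw [← Finset.sum_filter]
    have h2 : Finset.univ.filter (G.Adj u) = G.neighborFinset u := by
      ext v; simp [SimpleGraph.mem_neighborFinset]
    rw [h2, ← Finset.mul_sum, hsum, hf]
    field_simp
  set A : ℕ → Set Ω := fun n => {ω | ∀ j ≤ n, X j ω ≠ t} with hA
  have hAmeas : ∀ n, MeasurableSet (A n) := by
    intro n
    have hAe : A n = ⋂ j ∈ Finset.range (n+1), (X j) ⁻¹' {t}ᶜ := by
      ext ω
      simp [hA, Nat.lt_succ_iff]
    rw [hAe]
    exact MeasurableSet.biInter (Set.to_countable _)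
      (fun j _ => (hX j) (measurableSet_singleton t).compl)
  have hAanti : ∀ m n, m ≤ n → A n ⊆ A m :=
    fun m n hmn ω hω j hj => hω j (hj.trans hmn)
  have hAae : ∀ n, {ω | n < τ ω} =ᵐ[P] A n := by
    intro n
    rw [Filter.eventuallyEq_set]
    filter_upwards [hτ] with ω hω
    constructor
    · intro hlt j hj
      exact hω.2 j (lt_of_le_of_lt hj hlt)
    · intro hA'
      by_contra hn
      exact hA' (τ ω) (Nat.le_of_not_lt hn) hω.1
  set B : (n : ℕ) → Finset (Fin (n+1) → V) :=
    fun n => Finset.univ.filter (fun y => ∀ j, y j ≠ t) with hB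
  have hAB : ∀ (n : ℕ) (S : Set Ω), A n ∩ S = ⋃ y ∈ B n, (cyl X n y ∩ S) := by
    intro n S
    ext ω
    simp only [Set.mem_inter_iff, Set.mem_iUnion, hA, hB, Set.mem_setOf_eq,
      Finset.mem_filter, Finset.mem_univ, true_and, cyl]
    constructor
    · rintro ⟨h1, h2⟩
      exact ⟨fun j => X j ω, fun j => h1 j (Nat.lt_succ_iff.mp j.isLt), fun j => rfl, h2⟩
    · rintro ⟨y, hy, hcyl, h2⟩
      refine ⟨fun j hj => ?_, h2⟩
      have := hcyl ⟨j, Nat.lt_succ_of_le hj⟩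
      rw [this]
      exact hy _
  have hPA : ∀ (n : ℕ) (S : Set Ω), MeasurableSet S →
      P (A n ∩ S) = ∑ y ∈ B n, P (cyl X n y ∩ S) := by
    intro n S hS
    rw [hAB n S]
    exact measure_biUnion_cyl P X hX n (B n) S hS
  have hMarkov : ∀ (n : ℕ) (v : V), P (A n ∩ X (n+1) ⁻¹' {v})
      = ∑ u, P (A n ∩ X n ⁻¹' {u}) * p u v := by
    intro n v
    rw [hPA n _ ((hX (n+1)) (measurableSet_singleton v))]
    have h1 : ∀ y ∈ B n, P (cyl X n y ∩ X (n+1) ⁻¹' {v})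
        = P (cyl X n y) * p (y (Fin.last n)) v := fun y _ => cyl_step P X p hstep' n y v
    rw [Finset.sum_congr rfl h1]
    have h2 : ∀ u, P (A n ∩ X n ⁻¹' {u})
        = ∑ y ∈ B n, if y (Fin.last n) = u then P (cyl X n y) else 0 := by
      intro u
      rw [hPA n _ ((hX n) (measurableSet_singleton u))]
      refine Finset.sum_congr rfl fun y _ => ?_
      by_cases hy : y (Fin.last n) = u
      · rw [if_pos hy]
        congr 1
        apply Set.inter_eq_left.2
        intro ω hω
        have := hω (Fin.last n)
        simp only [Set.mem_preimage, Set.mem_singleton_iff]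
        rw [show ((Fin.last n : Fin (n+1)) : ℕ) = n from rfl] at this
        rw [this, hy]
      · rw [if_neg hy]
        have hemp : cyl X n y ∩ X n ⁻¹' {u} = ∅ := by
          ext ω
          simp only [Set.mem_inter_iff, Set.mem_preimage, Set.mem_singleton_iff,
            Set.mem_empty_iff_false, iff_false, not_and]
          intro hcyl hXn
          apply hy
          have := hcyl (Fin.last n)
          rw [show ((Fin.last n : Fin (n+1)) : ℕ) = n from rfl] at this
          rw [← this, hXn]
        rw [hemp, measure_empty]
    calc ∑ y ∈ B n, P (cyl X n y) * p (y (Fin.last n)) v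
        = ∑ y ∈ B n, ∑ u, (if y (Fin.last n) = u then P (cyl X n y) else 0) * p u v := by
          refine Finset.sum_congr rfl fun y _ => ?_
          rw [Finset.sum_eq_single (y (Fin.last n))]
          · rw [if_pos rfl]
          · intro u _ hu; rw [if_neg (fun h => hu h.symm), zero_mul]
          · intro hc; exact absurd (Finset.mem_univ _) hc
      _ = ∑ u, ∑ y ∈ B n, (if y (Fin.last n) = u then P (cyl X n y) else 0) * p u v :=
          Finset.sum_comm
      _ = ∑ u, P (A n ∩ X n ⁻¹' {u}) * p u v := by
          refine Finset.sum_congr rfl fun u _ => ?_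
          rw [h2 u, Finset.sum_mul]
  obtain ⟨δ, hδ0, hδ1, hkey⟩ : ∃ δ : ENNReal, 0 < δ ∧ δ ≤ 1 ∧
      ∀ n, P (A (n+N)) + δ * P (A n) ≤ P (A n) := by
    classical
    obtain ⟨v0⟩ : Nonempty V := inferInstance
    set D : ℕ := Finset.univ.sup (fun v => G.degree v) with hD
    have hDle : ∀ v, G.degree v ≤ D := fun v =>
      Finset.le_sup (f := fun v => G.degree v) (Finset.mem_univ v)
    have hD1 : 1 ≤ D := le_trans (hdeg v0) (hDle v0)
    set δ : ENNReal := ((D : ENNReal))⁻¹ ^ N with hδ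
    have hDinv_le : ((D : ENNReal))⁻¹ ≤ 1 := by
      rw [ENNReal.inv_le_one]
      exact_mod_cast hD1
    refine ⟨δ, ?_, ?_, ?_⟩
    · exact ENNReal.pow_pos (ENNReal.inv_pos.2 (by simp)) N
    · exact pow_le_one' hDinv_le N
    · intro n
      have hNpos : 0 < N := by rw [hN]; exact Fintype.card_pos
      -- per-cylinder estimate
      have hper : ∀ y ∈ B n, P (cyl X n y ∩ A (n+N)) + δ * P (cyl X n y) ≤ P (cyl X n y) := by
        intro y hy
        have hyt : ∀ j, y j ≠ t := by
          rw [hB] at hy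
          exact (Finset.mem_filter.mp hy).2
        set u : V := y (Fin.last n) with hu
        have hut : u ≠ t := hyt _
        obtain ⟨q0⟩ := hconn.preconnected u t
        set q := q0.bypass with hq
        have hqp : q.IsPath := q0.bypass_isPath
        set L : ℕ := q.length with hL
        have hLN : L < N := by rw [hN]; exact hqp.length_lt
        have hL0 : 0 < L := by
          rcases Nat.eq_zero_or_pos L with h | h
          · exact absurd (q.eq_of_length_eq_zero h) hut
          · exact h
        set w : ℕ → V := fun j => if h : j < n+1 then y ⟨j, h⟩ else q.getVert (j - n) with hw
        have hwy : (fun j : Fin (n+1) => w (j : ℕ)) = y := by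
          funext j; simp [hw, j.isLt, Nat.not_lt.mpr j.is_le]
        have hCbase : {ω | ∀ j ≤ n, X j ω = w j} = cyl X n y := by
          rw [cyl_eq_natCond, hwy]
        set C : Set Ω := {ω | ∀ j ≤ n + L, X j ω = w j} with hC
        have hCcyl : C = cyl X (n+L) (fun j => w (j : ℕ)) := cyl_eq_natCond X (n+L) w
        have hCmeas : MeasurableSet C := by
          rw [hCcyl]; exact measurableSet_cyl X hX _ _
        have hPC : P C = P (cyl X n y) * ∏ i ∈ Finset.range L, p (w (n+i)) (w (n+i+1)) := by
          rw [← hCbase]; exact multistep P X p hstep' w n L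
        -- identify steps along the walk
        have hwn : ∀ i, w (n + i) = q.getVert i := by
          intro i
          rcases Nat.eq_zero_or_pos i with h | h
          · subst h
            simp only [Nat.add_zero, hw, Nat.lt_succ_self, dif_pos]
            rw [q.getVert_zero]
            exact congrArg y (by ext; simp [Fin.last])
          · have : ¬ (n + i < n + 1) := by omega
            simp only [hw, this, dif_neg, not_false_iff]
            congr 1
            omega
        have hfac : ∀ i ∈ Finset.range L, ((D : ENNReal))⁻¹ ≤ p (w (n+i)) (w (n+i+1)) := by
          intro i hi
          have hi' : i < L := Finset.mem_range.mp hi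
          have hadj : G.Adj (q.getVert i) (q.getVert (i+1)) := q.adj_getVert_succ hi'
          have : w (n + i) = q.getVert i := hwn i
          have h2 : w (n + i + 1) = q.getVert (i+1) := by
            rw [show n + i + 1 = n + (i+1) from by ring, hwn (i+1)]
          rw [this, h2, hp]
          simp only [hadj, if_true]
          exact ENNReal.inv_le_inv.2 (by exact_mod_cast hDle (q.getVert i))
        have hProd : δ ≤ ∏ i ∈ Finset.range L, p (w (n+i)) (w (n+i+1)) := by
          calc δ = ((D : ENNReal))⁻¹ ^ N := rfl
            _ ≤ ((D : ENNReal))⁻¹ ^ L := pow_le_pow_of_le_one zero_le hDinv_le hLN.le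
            _ = ∏ _i ∈ Finset.range L, ((D : ENNReal))⁻¹ := by
                rw [Finset.prod_const, Finset.card_range]
            _ ≤ _ := Finset.prod_le_prod' hfac
        have hδC : δ * P (cyl X n y) ≤ P C := by
          rw [hPC, mul_comm]
          exact mul_le_mul_right hProd _
        have hCsub : C ⊆ cyl X n y := by
          rw [← hCbase]
          intro ω hω j hj
          exact hω j (hj.trans (Nat.le_add_right n L))
        have hCdisj : Disjoint (cyl X n y ∩ A (n+N)) C := by
          refine Set.disjoint_left.2 ?_
          rintro ω ⟨_, hωA⟩ hωC
          have h1 : X (n+L) ω = w (n+L) := hωC (n+L) le_rfl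
          have h2 : w (n + L) = t := by rw [hwn L, q.getVert_length]
          have h3 : X (n+L) ω ≠ t := by
            rw [hA] at hωA
            exact hωA (n+L) (by omega)
          exact h3 (h1.trans h2)
        calc P (cyl X n y ∩ A (n+N)) + δ * P (cyl X n y)
            ≤ P (cyl X n y ∩ A (n+N)) + P C := add_le_add le_rfl hδC
          _ = P ((cyl X n y ∩ A (n+N)) ∪ C) := (measure_union hCdisj hCmeas).symm
          _ ≤ P (cyl X n y) := measure_mono (Set.union_subset Set.inter_subset_left hCsub)
      -- sum over cylinders
      have e1 : P (A (n+N)) = ∑ y ∈ B n, P (cyl X n y ∩ A (n+N)) := by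
        rw [← hPA n _ (hAmeas (n+N)), Set.inter_eq_right.2 (hAanti n (n+N) (by omega))]
      have e2 : P (A n) = ∑ y ∈ B n, P (cyl X n y) := by
        have := hPA n Set.univ MeasurableSet.univ
        simpa using this
      rw [e1, e2, Finset.mul_sum, ← Finset.sum_add_distrib]
      exact Finset.sum_le_sum hper
  have hsumA : ∑' n, P (A n) ≠ ⊤ := by
    haveI : NeZero N := ⟨hNpos.ne'⟩
    have hδtop : δ ≠ ⊤ := ne_top_of_le_ne_top ENNReal.one_ne_top hδ1
    have hstep2 : ∀ n, P (A (n+N)) ≤ (1-δ) * P (A n) := by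
      intro n
      have hb : P (A n) ≠ ⊤ := measure_ne_top P _
      rw [ENNReal.sub_mul (fun _ _ => hb), one_mul]
      exact ENNReal.le_sub_of_add_le_right (ENNReal.mul_ne_top hδtop hb) (hkey n)
    have hpow : ∀ k, P (A (k*N)) ≤ (1-δ)^k := by
      intro k
      induction k with
      | zero => simpa using prob_le_one
      | succ k ih =>
          have : (k+1) * N = k*N + N := by ring
          rw [this, pow_succ, mul_comm ((1-δ)^k) (1-δ)]
          calc P (A (k*N + N)) ≤ (1-δ) * P (A (k*N)) := hstep2 _
            _ ≤ (1-δ) * (1-δ)^k := mul_le_mul_right ih _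
    have hgeom : ∀ n, P (A n) ≤ (1-δ) ^ (n / N) := by
      intro n
      calc P (A n) ≤ P (A (n / N * N)) :=
            measure_mono (hAanti _ _ (Nat.div_mul_le_self n N))
        _ ≤ (1-δ) ^ (n / N) := hpow _
    have h1r : (1:ENNReal) - (1-δ) = δ := ENNReal.sub_sub_cancel ENNReal.one_ne_top hδ1
    have hle : ∑' n, P (A n) ≤ (N : ENNReal) * δ⁻¹ := by
      calc ∑' n, P (A n) ≤ ∑' n, (1-δ)^(n / N) := ENNReal.tsum_le_tsum hgeom
        _ = ∑' x : ℕ × Fin N, (1-δ)^x.1 := by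
            rw [← Equiv.tsum_eq (Nat.divModEquiv N) (fun x : ℕ × Fin N => (1-δ)^x.1)]
            rfl
        _ = ∑' k : ℕ, ∑' _i : Fin N, (1-δ)^k := ENNReal.tsum_prod (f := fun k _ => (1-δ)^k)
        _ = ∑' k : ℕ, (N : ENNReal) * (1-δ)^k := by
            congr 1
            funext k
            rw [tsum_fintype]
            simp [Finset.card_univ, mul_comm]
        _ = (N : ENNReal) * ∑' k : ℕ, (1-δ)^k := ENNReal.tsum_mul_left
        _ = (N : ENNReal) * δ⁻¹ := by rw [ENNReal.tsum_geometric, h1r]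
    exact ne_top_of_le_ne_top
      (ENNReal.mul_ne_top (ENNReal.natCast_ne_top N) (ENNReal.inv_ne_top.2 hδ0.ne')) hle
  show ∫ ω, (∑ j ∈ Finset.range (τ ω), f (X j ω)) ∂P = φ s - φ t
  classical
  have hmV : ∀ (h : V → ℝ), Measurable h := fun h => measurable_of_countable h
  have habs : ∀ (h : V → ℝ) (v : V), |h v| ≤ ∑ v', |h v'| := fun h v =>
    Finset.single_le_sum (f := fun v => |h v|) (fun v _ => abs_nonneg _) (Finset.mem_univ v)
  have hint : ∀ (h : V → ℝ) (Y : Ω → V), Measurable Y →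
      Integrable (fun ω => h (Y ω)) P := by
    intro h Y hY
    refine ⟨((hmV h).comp hY).aestronglyMeasurable, ?_⟩
    apply HasFiniteIntegral.of_bounded (C := ∑ v, |h v|)
    exact ae_of_all _ fun ω => (Real.norm_eq_abs _) ▸ habs h (Y ω)
  set g : ℕ → Ω → ℝ := fun n ω => if n < τ ω then f (X n ω) else 0 with hg
  have hτn_meas : ∀ n : ℕ, MeasurableSet {ω | n < τ ω} := fun n =>
    hτmeas measurableSet_Ioi
  have hgmeas : ∀ n, Measurable (g n) := fun n =>
    Measurable.ite (hτn_meas n) ((hmV f).comp (hX n)) measurable_const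
  have hind : ∀ (h : V → ℝ) (n k : ℕ), (∫ ω, (if n < τ ω then h (X k ω) else 0) ∂P)
      = ∑ v, h v * (P (A n ∩ X k ⁻¹' {v})).toReal := by
    intro h n k
    have h1 : (fun ω => if n < τ ω then h (X k ω) else 0)
        =ᵐ[P] (A n).indicator (fun ω => h (X k ω)) := by
      filter_upwards [Filter.eventuallyEq_set.mp (hAae n)] with ω hiff
      by_cases hω : ω ∈ A n
      · rw [Set.indicator_of_mem hω, if_pos (hiff.mpr hω)]
      · rw [Set.indicator_of_notMem hω, if_neg (fun hc => hω (hiff.mp hc))]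
    rw [integral_congr_ae h1]
    exact integral_indicator_comp P X hX (A n) (hAmeas n) k h
  have hint2 : ∀ (h : V → ℝ) (n k : ℕ),
      Integrable (fun ω => if n < τ ω then h (X k ω) else 0) P := by
    intro h n k
    refine ⟨(Measurable.ite (hτn_meas n) ((hmV h).comp (hX k))
      measurable_const).aestronglyMeasurable, ?_⟩
    apply HasFiniteIntegral.of_bounded (C := ∑ v, |h v|)
    refine ae_of_all _ fun ω => ?_
    rw [Real.norm_eq_abs]
    by_cases hc : n < τ ω
    · rw [if_pos hc]; exact habs h (X k ω)
    · rw [if_neg hc, abs_zero]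
      exact Finset.sum_nonneg fun v _ => abs_nonneg _
  have hZmeas : ∀ n, Measurable (fun ω => X (min n (τ ω)) ω) := by
    intro n
    induction n with
    | zero =>
        have : (fun ω => X (min 0 (τ ω)) ω) = X 0 := by
          funext ω; rw [Nat.zero_min]
        rw [this]; exact hX 0
    | succ n ih =>
        have heq : (fun ω => X (min (n+1) (τ ω)) ω)
            = fun ω => if τ ω ≤ n then X (min n (τ ω)) ω else X (n+1) ω := by
          funext ω
          by_cases hc : τ ω ≤ n
          · rw [if_pos hc, min_eq_right (hc.trans (Nat.le_succ n)), min_eq_right hc]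
          · rw [if_neg hc, min_eq_left (by omega)]
        rw [heq]
        exact Measurable.ite (hτmeas measurableSet_Iic) ih (hX (n+1))
  set c : ℕ → ℝ := fun n => ∫ ω, φ (X (min n (τ ω)) ω) ∂P with hc
  have hc0 : c 0 = φ s := by
    have h1 : (fun ω => φ (X (min 0 (τ ω)) ω)) =ᵐ[P] fun _ => φ s := by
      filter_upwards [h0] with ω hω
      rw [Nat.zero_min, hω]
    rw [hc]
    simp only
    rw [integral_congr_ae h1, integral_const, probReal_univ, one_smul]
  have hclim : Tendsto c atTop (nhds (φ t)) := by
    have hφt : φ t = ∫ _ω, φ t ∂P := by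
      rw [integral_const, probReal_univ, one_smul]
    rw [hc, hφt]
    apply tendsto_integral_of_dominated_convergence (fun _ => ∑ v, |φ v|)
    · exact fun n => ((hmV φ).comp (hZmeas n)).aestronglyMeasurable
    · exact integrable_const _
    · intro n
      exact ae_of_all _ fun ω => (Real.norm_eq_abs _) ▸ habs φ _
    · filter_upwards [hτ] with ω hω
      apply tendsto_atTop_of_eventually_const (i₀ := τ ω)
      intro n hn
      rw [min_eq_right hn, hω.1]
  have hstepid : ∀ n, ∫ ω, g n ω ∂P = c n - c (n+1) := by
    intro n
    have hpt : ∀ ω, φ (X (min n (τ ω)) ω) - φ (X (min (n+1) (τ ω)) ω)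
        = (if n < τ ω then φ (X n ω) else 0) - (if n < τ ω then φ (X (n+1) ω) else 0) := by
      intro ω
      by_cases hc' : n < τ ω
      · rw [if_pos hc', if_pos hc', min_eq_left (by omega), min_eq_left (by omega)]
      · push_neg at hc'
        rw [if_neg (not_lt.2 hc'), if_neg (not_lt.2 hc'), min_eq_right hc',
          min_eq_right (hc'.trans (Nat.le_succ n)), sub_self, sub_self]
    have e1 : c n - c (n+1)
        = ∫ ω, (φ (X (min n (τ ω)) ω) - φ (X (min (n+1) (τ ω)) ω)) ∂P :=
      (integral_sub (hint φ _ (hZmeas n)) (hint φ _ (hZmeas (n+1)))).symm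
    have e2 : ∫ ω, (φ (X (min n (τ ω)) ω) - φ (X (min (n+1) (τ ω)) ω)) ∂P
        = (∫ ω, (if n < τ ω then φ (X n ω) else 0) ∂P)
          - ∫ ω, (if n < τ ω then φ (X (n+1) ω) else 0) ∂P := by
      rw [← integral_sub (hint2 φ n n) (hint2 φ n (n+1))]
      exact integral_congr_ae (ae_of_all _ hpt)
    have e4 : ∫ ω, (if n < τ ω then φ (X (n+1) ω) else 0) ∂P
        = ∑ u, (P (A n ∩ X n ⁻¹' {u})).toReal * (φ u - f u) := by
      rw [hind φ n (n+1)]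
      have e4a : ∀ v, φ v * (P (A n ∩ X (n+1) ⁻¹' {v})).toReal
          = ∑ u, (P (A n ∩ X n ⁻¹' {u})).toReal * ((p u v).toReal * φ v) := by
        intro v
        rw [hMarkov n v, ENNReal.toReal_sum
          (fun u _ => ENNReal.mul_ne_top (measure_ne_top P _) (hptop u v))]
        rw [Finset.mul_sum]
        refine Finset.sum_congr rfl fun u _ => ?_
        rw [ENNReal.toReal_mul]
        ring
      rw [Finset.sum_congr rfl fun v _ => e4a v, Finset.sum_comm]
      refine Finset.sum_congr rfl fun u _ => ?_
      rw [← Finset.mul_sum, hPφ u]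
    rw [hind f n n, e1, e2, hind φ n n, e4, ← Finset.sum_sub_distrib]
    refine Finset.sum_congr rfl fun u _ => ?_
    ring
  set Cf : ENNReal := ∑ v, (‖f v‖₊ : ENNReal) with hCf
  have hCtop : Cf ≠ ⊤ := by
    rw [hCf]
    exact (ENNReal.sum_lt_top.mpr fun v _ => ENNReal.coe_lt_top).ne
  have hCle : ∀ v, (‖f v‖₊ : ENNReal) ≤ Cf := fun v =>
    Finset.single_le_sum (f := fun v => ((‖f v‖₊ : ENNReal)))
      (fun v _ => zero_le) (Finset.mem_univ v)
  have hgbound : ∀ n, ∫⁻ ω, ‖g n ω‖₊ ∂P ≤ Cf * P (A n) := by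
    intro n
    have hb : ∀ᵐ ω ∂P, (‖g n ω‖₊ : ENNReal) ≤ (A n).indicator (fun _ => Cf) ω := by
      filter_upwards [Filter.eventuallyEq_set.mp (hAae n)] with ω hiff
      by_cases hc' : n < τ ω
      · rw [Set.indicator_of_mem (hiff.mp hc')]
        have : g n ω = f (X n ω) := if_pos hc'
        rw [this]
        exact hCle (X n ω)
      · have : g n ω = 0 := if_neg hc'
        rw [this]
        simp
    calc ∫⁻ ω, ‖g n ω‖₊ ∂P ≤ ∫⁻ ω, (A n).indicator (fun _ => Cf) ω ∂P :=
          lintegral_mono_ae hb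
      _ = Cf * P (A n) := lintegral_indicator_const (hAmeas n) Cf
  have htsum_ne : ∑' n, ∫⁻ ω, ‖g n ω‖₊ ∂P ≠ ⊤ := by
    refine ne_top_of_le_ne_top ?_ (ENNReal.tsum_le_tsum hgbound)
    rw [ENNReal.tsum_mul_left]
    exact ENNReal.mul_ne_top hCtop hsumA
  have hpt2 : ∀ ω, (∑ j ∈ Finset.range (τ ω), f (X j ω)) = ∑' n, g n ω := by
    intro ω
    rw [tsum_eq_sum (s := Finset.range (τ ω))
      (fun n hn => if_neg (fun hc => hn (Finset.mem_range.2 hc)))]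
    exact Finset.sum_congr rfl fun j hj => (if_pos (Finset.mem_range.mp hj)).symm
  rw [show (fun ω => ∑ j ∈ Finset.range (τ ω), f (X j ω))
      = fun ω => ∑' n, g n ω from funext hpt2]
  rw [integral_tsum (fun n => (hgmeas n).aestronglyMeasurable) htsum_ne]
  have hsummable : Summable (fun n => ∫ ω, g n ω ∂P) := by
    apply Summable.of_norm_bounded (g := fun n => (Cf * P (A n)).toReal)
    · apply ENNReal.summable_toReal
      rw [ENNReal.tsum_mul_left]
      exact ENNReal.mul_ne_top hCtop hsumA
    · intro n
      calc ‖∫ ω, g n ω ∂P‖ ≤ (∫⁻ ω, ‖g n ω‖₊ ∂P).toReal := by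
            simp only [← enorm_eq_nnnorm, ← ofReal_norm]
            exact norm_integral_le_lintegral_norm _
        _ ≤ (Cf * P (A n)).toReal := ENNReal.toReal_mono
            (ENNReal.mul_ne_top hCtop (measure_ne_top P _)) (hgbound n)
  have h1 := hsummable.hasSum.tendsto_sum_nat
  have h2 : Tendsto (fun M => ∑ n ∈ Finset.range M, ∫ ω, g n ω ∂P) atTop
      (nhds (φ s - φ t)) := by
    have heq : ∀ M, ∑ n ∈ Finset.range M, ∫ ω, g n ω ∂P = c 0 - c M := by
      intro M
      rw [Finset.sum_congr rfl (fun n _ => hstepid n)]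
      exact Finset.sum_range_sub' c M
    rw [funext heq, hc0]
    exact tendsto_const_nhds.sub hclim
  exact tendsto_nhds_unique h1 h2
end

section
/- Let G be a finite tree on at least 2 vertices, let λ₂(G) be the second-smallest eigenvalue of its Laplacian matrix L = D − A, and let φ be an eigenvector of L with eigenvalue λ₂(G). Then every vertex at which φ attains its maximum over all vertices has degree 1, and every vertex at which φ attains its minimum over all vertices has degree 1. -/
open Matrix

section Aux

open Finset

variable {V : Type*} [Fintype V] [DecidableEq V]


lemma exists_eig_le_rayleigh (G : SimpleGraph V) [DecidableRel G.Adj]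
    (hG : G.Connected) (x : V → ℝ) (hx : x ≠ 0) (hsum : ∑ v, x v = 0) :
    ∃ μ : ℝ, 0 < μ ∧ (∃ ψ : V → ℝ, ψ ≠ 0 ∧ G.lapMatrix ℝ *ᵥ ψ = μ • ψ) ∧
      μ * (x ⬝ᵥ x) ≤ x ⬝ᵥ (G.lapMatrix ℝ *ᵥ x) := by
  classical
  have hA : (G.lapMatrix ℝ).IsHermitian := (SimpleGraph.posSemidef_lapMatrix ℝ G).1
  set b := hA.eigenvectorBasis with hb
  set μ := hA.eigenvalues with hμ
  set x' : EuclideanSpace ℝ V := WithLp.toLp 2 x with hx'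
  set c : V → ℝ := fun i => b.repr x' i with hc
  -- x = ∑ i, c i • b i  (as functions)
  have hxdecomp : ∀ v, x v = ∑ i, c i * b i v := by
    intro v
    have h0 := b.sum_repr x'
    have h1 : (∑ i : V, b.repr x' i • b i) v = x' v := by rw [h0]
    rw [show x v = x' v from rfl, ← h1]
    have h2 : (∑ i : V, b.repr x' i • b i) v = ∑ i : V, (b.repr x' i • b i) v :=
      by rw [WithLp.ofLp_sum, Finset.sum_apply]
    rw [h2]; rfl
  have hinner : ∀ i, ∑ v, b i v * x v = c i := by
    intro i
    have := b.repr_apply_apply x' i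
    rw [PiLp.inner_apply] at this
    simpa [RCLike.inner_apply, hc, hx', mul_comm] using this.symm
  -- ‖x‖² = ∑ c i ^ 2
  have hnorm : x ⬝ᵥ x = ∑ i, c i * c i := by
    have := b.repr.inner_map_map x' x'
    rw [PiLp.inner_apply, PiLp.inner_apply] at this
    simpa [RCLike.inner_apply, dotProduct, hc, hx', pow_two] using this.symm
  -- energy = ∑ μ i * c i ^ 2
  have hAx : ∀ v, (G.lapMatrix ℝ *ᵥ x) v = ∑ i, (c i * μ i) * b i v := by
    have hxe : x = ∑ i, c i • (⇑(b i) : V → ℝ) := by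
      funext v; rw [hxdecomp v]; simp [Finset.sum_apply]
    intro v
    conv_lhs => rw [hxe]
    rw [← mulVecLin_apply, map_sum]
    rw [Finset.sum_apply v Finset.univ _]
    refine Finset.sum_congr rfl fun i _ => ?_
    have : (G.lapMatrix ℝ) *ᵥ ⇑(b i) = μ i • ⇑(b i) := hA.mulVec_eigenvectorBasis i
    simp [mulVecLin_apply, mulVec_smul, this, Pi.smul_apply, smul_eq_mul]
    ring
  have henergy : x ⬝ᵥ (G.lapMatrix ℝ *ᵥ x) = ∑ i, μ i * (c i * c i) := by
    unfold dotProduct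
    simp_rw [hAx, Finset.mul_sum]
    rw [Finset.sum_comm]
    refine Finset.sum_congr rfl fun i _ => ?_
    rw [show ∑ v, x v * ((c i * μ i) * b i v) = (c i * μ i) * ∑ v, b i v * x v by
      rw [Finset.mul_sum]; exact Finset.sum_congr rfl fun v _ => by ring]
    rw [hinner i]; ring
  -- support nonempty
  have hsne : (Finset.univ.filter (fun i => c i ≠ 0)).Nonempty := by
    by_contra h
    rw [Finset.not_nonempty_iff_eq_empty, Finset.filter_eq_empty_iff] at h
    apply hx
    funext v
    show x v = 0
    rw [hxdecomp v]
    exact Finset.sum_eq_zero fun i _ => by rw [not_not.mp (h (Finset.mem_univ i))]; ring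
  obtain ⟨i₀, hi₀s, hi₀min⟩ := Finset.exists_min_image _ μ hsne
  rw [Finset.mem_filter] at hi₀s
  -- positivity of eigenvalues on the support
  have hpos : ∀ i, c i ≠ 0 → 0 < μ i := by
    intro i hci
    rcases lt_or_eq_of_le ((SimpleGraph.posSemidef_lapMatrix ℝ G).eigenvalues_nonneg i) with h | h
    · exact h
    · exfalso
      have hker : G.lapMatrix ℝ *ᵥ ⇑(b i) = 0 := by
        rw [hA.mulVec_eigenvectorBasis i, ← h, zero_smul]
      have hconst : ∀ u w : V, b i u = b i w := by
        intro u w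
        have := (G.lapMatrix_mulVec_eq_zero_iff_forall_reachable (x := ⇑(b i))).mp
          hker
        exact this u w (hG.preconnected u w)
      obtain ⟨v0⟩ := hG.nonempty
      apply hci
      rw [← hinner i]
      calc ∑ v, b i v * x v = ∑ v, b i v0 * x v :=
            Finset.sum_congr rfl fun v _ => by rw [hconst v v0]
        _ = b i v0 * ∑ v, x v := by rw [Finset.mul_sum]
        _ = 0 := by rw [hsum, mul_zero]
  refine ⟨μ i₀, hpos i₀ hi₀s.2, ⟨⇑(b i₀), ?_, hA.mulVec_eigenvectorBasis i₀⟩, ?_⟩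
  · intro h
    exact b.orthonormal.ne_zero i₀ (by ext v; exact congrFun h v)
  · rw [hnorm, henergy, Finset.mul_sum]
    refine Finset.sum_le_sum fun i _ => ?_
    by_cases hci : c i = 0
    · simp [hci]
    · have h1 : μ i₀ ≤ μ i := hi₀min i (Finset.mem_filter.mpr ⟨Finset.mem_univ i, hci⟩)
      exact mul_le_mul_of_nonneg_right h1 (mul_self_nonneg _)


/-- cross terms of the Laplacian quadratic form vanish for "separated" vectors -/
lemma dot_lap_cross (G : SimpleGraph V) [DecidableRel G.Adj] (f g : V → ℝ)
    (h : ∀ a b : V, (a = b ∨ G.Adj a b) → f a * g b = 0) :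
    f ⬝ᵥ (G.lapMatrix ℝ *ᵥ g) = 0 := by
  simp only [dotProduct, mulVec, Finset.mul_sum]
  refine Finset.sum_eq_zero fun a _ => ?_
  refine Finset.sum_eq_zero fun b _ => ?_
  by_cases hab : a = b ∨ G.Adj a b
  · have h0 := h a b hab
    calc f a * (G.lapMatrix ℝ a b * g b) = G.lapMatrix ℝ a b * (f a * g b) := by ring
      _ = 0 := by rw [h0, mul_zero]
  · push_neg at hab
    have h1 : G.lapMatrix ℝ a b = 0 := by
      simp [SimpleGraph.lapMatrix, SimpleGraph.degMatrix, Matrix.diagonal_apply_ne _ hab.1,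
        hab.2]
    rw [h1]; ring
lemma sum_eigvec_zero (G : SimpleGraph V) [DecidableRel G.Adj] {l : ℝ} {φ : V → ℝ}
    (hl : l ≠ 0) (hpair : G.lapMatrix ℝ *ᵥ φ = l • φ) : ∑ v, φ v = 0 := by
  have h0 : (fun _ => (1:ℝ)) ⬝ᵥ (G.lapMatrix ℝ *ᵥ φ) = 0 := by
    rw [Matrix.dotProduct_mulVec,
      show (G.lapMatrix ℝ) = (G.lapMatrix ℝ)ᵀ from (G.isSymm_lapMatrix (R := ℝ)).symm,
      Matrix.vecMul_transpose, G.lapMatrix_mulVec_const_eq_zero, zero_dotProduct]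
  rw [hpair] at h0
  simp only [dotProduct, Pi.smul_apply, smul_eq_mul, one_mul] at h0
  rw [← Finset.mul_sum] at h0
  exact (mul_eq_zero.mp h0).resolve_left hl

lemma lap_const_mulVec (G : SimpleGraph V) [DecidableRel G.Adj] (M : ℝ) :
    G.lapMatrix ℝ *ᵥ (fun _ => M) = 0 := by
  have : (fun (_ : V) => M) = M • (fun _ => (1:ℝ)) := by funext w; simp
  rw [this, Matrix.mulVec_smul, G.lapMatrix_mulVec_const_eq_zero, smul_zero]

lemma lap_shift (G : SimpleGraph V) [DecidableRel G.Adj] {l M : ℝ} {φ : V → ℝ}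
    (hpair : G.lapMatrix ℝ *ᵥ φ = l • φ) :
    G.lapMatrix ℝ *ᵥ (fun w => φ w - M) = l • φ := by
  have : (fun w => φ w - M) = φ - (fun _ => M) := by funext w; simp
  rw [this, Matrix.mulVec_sub, hpair, lap_const_mulVec, sub_zero]

lemma branch_energy (G : SimpleGraph V) [DecidableRel G.Adj] (l M : ℝ) (φ : V → ℝ)
    (hpair : G.lapMatrix ℝ *ᵥ φ = l • φ)
    (B : Set V) [DecidablePred (· ∈ B)] (v : V) (hv : v ∉ B)
    (hclosed : ∀ w ∈ B, ∀ w', G.Adj w w' → w' ≠ v → w' ∈ B) (hMv : φ v = M) :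
    (fun w => if w ∈ B then φ w - M else 0) ⬝ᵥ
        (G.lapMatrix ℝ *ᵥ (fun w => if w ∈ B then φ w - M else 0)) =
      l * ((fun w => if w ∈ B then φ w - M else 0) ⬝ᵥ (fun w => if w ∈ B then φ w - M else 0))
        + l * M * (∑ w, if w ∈ B then φ w - M else 0) := by
  set y : V → ℝ := fun w => if w ∈ B then φ w - M else 0 with hy
  set ψ : V → ℝ := fun w => φ w - M with hψ
  have hyB : ∀ w ∈ B, y w = ψ w := fun w hw => by simp [hy, hψ, hw]
  have hyN : ∀ w, w ∉ B → y w = 0 := fun w hw => by simp [hy, hw]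
  have hcross : y ⬝ᵥ (G.lapMatrix ℝ *ᵥ (ψ - y)) = 0 := by
    apply dot_lap_cross
    intro a b hab
    by_cases ha : a ∈ B
    · have hb : (ψ - y) b = 0 := by
        by_cases hbB : b ∈ B
        · simp [hyB b hbB]
        · by_cases hbv : b = v
          · simp [hbv, hyN v hv, hψ, hMv]
          · exfalso
            rcases hab with rfl | hadj
            · exact hbB ha
            · exact hbB (hclosed a ha b hadj hbv)
      rw [hb, mul_zero]
    · rw [hyN a ha, zero_mul]
  have hmain : y ⬝ᵥ (G.lapMatrix ℝ *ᵥ y) = y ⬝ᵥ (l • φ) := by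
    have : G.lapMatrix ℝ *ᵥ y = (G.lapMatrix ℝ *ᵥ ψ) - (G.lapMatrix ℝ *ᵥ (ψ - y)) := by
      rw [← Matrix.mulVec_sub]; congr 1; funext w; simp
    rw [this, dotProduct_sub, hcross, sub_zero, lap_shift G hpair]
  rw [hmain]
  have h1 : y ⬝ᵥ (l • φ) = l * ∑ w, y w * φ w := by
    simp only [dotProduct, Pi.smul_apply, smul_eq_mul, Finset.mul_sum]
    exact Finset.sum_congr rfl fun w _ => by ring
  have h2 : ∀ w, y w * φ w = y w * y w + M * y w := by
    intro w
    by_cases hw : w ∈ B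
    · simp only [hy, if_pos hw]; ring
    · simp only [hy, if_neg hw]; ring
  rw [h1]
  simp only [h2, Finset.sum_add_distrib, ← Finset.mul_sum]
  simp only [dotProduct]
  ring

/-- The graph `G` with vertex `v` "removed" (all edges at `v` deleted). -/
def delv (G : SimpleGraph V) (v : V) : SimpleGraph V where
  Adj a b := G.Adj a b ∧ a ≠ v ∧ b ≠ v
  symm := ⟨fun _ _ ⟨h, ha, hb⟩ => ⟨h.symm, hb, ha⟩⟩
  loopless := ⟨fun a ⟨h, _, _⟩ => G.ne_of_adj h rfl⟩

lemma delv_le (G : SimpleGraph V) (v : V) : delv G v ≤ G := fun _ _ h => h.1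

lemma delv_end_ne {G : SimpleGraph V} {v : V} :
    ∀ {a b : V}, (delv G v).Walk a b → a ≠ v → b ≠ v := by
  intro a b p
  induction p with
  | nil => exact fun h => h
  | cons h p ih => exact fun _ => ih h.2.2

lemma delv_walk_avoid {G : SimpleGraph V} {v : V} :
    ∀ {a b : V} (p : (delv G v).Walk a b), a ≠ v → v ∉ p.support := by
  intro a b p
  induction p with
  | nil => intro ha; simpa using fun h => ha h.symm
  | cons h p ih =>
    intro ha
    rw [SimpleGraph.Walk.support_cons, List.mem_cons]
    rintro (rfl | hmem)
    · exact ha rfl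
    · exact ih h.2.2 hmem

lemma branches_disjoint (G : SimpleGraph V) (hT : G.IsTree) {v u₁ u₂ : V}
    (h1 : G.Adj v u₁) (h2 : G.Adj v u₂) (hne : u₁ ≠ u₂) (w : V)
    (r1 : (delv G v).Reachable u₁ w) (r2 : (delv G v).Reachable u₂ w) : False := by
  have r12 : (delv G v).Reachable u₁ u₂ := r1.trans r2.symm
  obtain ⟨p0⟩ := r12
  let q : (delv G v).Path u₁ u₂ := p0.toPath
  have hqsup : v ∉ (q : (delv G v).Walk u₁ u₂).support :=
    delv_walk_avoid _ (G.ne_of_adj h1).symm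
  have hedges : ∀ e ∈ (q : (delv G v).Walk u₁ u₂).edges, e ∈ G.edgeSet := by
    intro e he
    exact SimpleGraph.edgeSet_mono (delv_le G v)
      ((q : (delv G v).Walk u₁ u₂).edges_subset_edgeSet he)
  let q' : G.Walk u₁ u₂ := (q : (delv G v).Walk u₁ u₂).transfer G hedges
  have hq'path : q'.IsPath := q.isPath.transfer hedges
  have hq'sup : v ∉ q'.support := by
    rw [SimpleGraph.Walk.support_transfer]; exact hqsup
  -- two distinct paths from v to u₁ in a tree
  let P₁ : G.Walk v u₁ := SimpleGraph.Walk.cons h1 SimpleGraph.Walk.nil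
  let P₂ : G.Walk v u₁ := SimpleGraph.Walk.cons h2 q'.reverse
  have hP₁ : P₁.IsPath := by
    apply SimpleGraph.Walk.IsPath.cons SimpleGraph.Walk.IsPath.nil
    simp [G.ne_of_adj h1]
  have hP₂ : P₂.IsPath := by
    apply SimpleGraph.Walk.IsPath.cons hq'path.reverse
    rw [SimpleGraph.Walk.support_reverse, List.mem_reverse]
    exact hq'sup
  obtain ⟨p, _, hu⟩ := hT.existsUnique_path v u₁
  have heq : P₁ = P₂ := (hu P₁ hP₁).trans (hu P₂ hP₂).symm
  have hlen : P₁.length = P₂.length := congrArg SimpleGraph.Walk.length heq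
  have hq'0 : q'.length = 0 := by
    simp only [P₁, P₂, SimpleGraph.Walk.length_cons, SimpleGraph.Walk.length_nil,
      SimpleGraph.Walk.length_reverse] at hlen
    omega
  exact hne (SimpleGraph.Walk.eq_of_length_eq_zero hq'0)

lemma key_max_leaf (G : SimpleGraph V) [DecidableRel G.Adj] (hT : G.IsTree)
    (hcard : 2 ≤ Fintype.card V) (l : ℝ) (φ : V → ℝ) (hl0 : 0 < l)
    (hmin : ∀ μ : ℝ, 0 < μ → (∃ ψ : V → ℝ, ψ ≠ 0 ∧ G.lapMatrix ℝ *ᵥ ψ = μ • ψ) → l ≤ μ)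
    (hφne : φ ≠ 0) (heig : G.lapMatrix ℝ *ᵥ φ = l • φ)
    (v : V) (hmax : ∀ w, φ w ≤ φ v) : G.degree v = 1 := by
  classical
  set M := φ v with hM
  have hsum : ∑ w, φ w = 0 := sum_eigvec_zero G hl0.ne' heig
  have hMpos : 0 < M := by
    by_contra h
    push_neg at h
    apply hφne
    funext w
    have := Finset.sum_eq_zero_iff_of_nonpos
      (fun w (_ : w ∈ Finset.univ) => (hmax w).trans h) |>.mp hsum w (Finset.mem_univ w)
    exact this
  have hdegpos : 0 < G.degree v := by
    obtain ⟨w, hw⟩ := Fintype.exists_ne_of_one_lt_card (by omega) v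
    obtain ⟨p⟩ := hT.isConnected.preconnected v w
    rw [G.degree_pos_iff_exists_adj]
    cases p with
    | nil => exact absurd rfl hw.symm
    | cons h _ => exact ⟨_, h⟩
  by_contra hdeg
  have hdeg2 : 1 < (G.neighborFinset v).card := by
    have := G.card_neighborFinset_eq_degree v
    omega
  obtain ⟨u₁, hu₁, u₂, hu₂, hne⟩ := Finset.one_lt_card.mp hdeg2
  rw [SimpleGraph.mem_neighborFinset] at hu₁ hu₂
  -- the two branches
  set B₁ : Set V := {w | (delv G v).Reachable u₁ w} with hB₁
  set B₂ : Set V := {w | (delv G v).Reachable u₂ w} with hB₂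
  have hu₁B : u₁ ∈ B₁ := SimpleGraph.Reachable.refl u₁
  have hu₂B : u₂ ∈ B₂ := SimpleGraph.Reachable.refl u₂
  have hvne : ∀ u, G.Adj v u → ∀ w, (delv G v).Reachable u w → w ≠ v := by
    intro u hu w hr
    obtain ⟨p⟩ := hr
    exact delv_end_ne p (G.ne_of_adj hu).symm
  have hvB₁ : v ∉ B₁ := fun h => hvne u₁ hu₁ v h rfl
  have hvB₂ : v ∉ B₂ := fun h => hvne u₂ hu₂ v h rfl
  have hclosed : ∀ u, G.Adj v u → ∀ w, (delv G v).Reachable u w →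
      ∀ w', G.Adj w w' → w' ≠ v → (delv G v).Reachable u w' := by
    intro u hu w hr w' hadj hw'
    exact hr.trans (SimpleGraph.Adj.reachable ⟨hadj, hvne u hu w hr, hw'⟩)
  have hdisj : ∀ w, w ∈ B₁ → w ∈ B₂ → False := fun w r1 r2 =>
    branches_disjoint G hT hu₁ hu₂ hne w r1 r2
  set y₁ : V → ℝ := fun w => if w ∈ B₁ then φ w - M else 0 with hy₁
  set y₂ : V → ℝ := fun w => if w ∈ B₂ then φ w - M else 0 with hy₂
  have hy₁np : ∀ w, y₁ w ≤ 0 := by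
    intro w
    rw [hy₁]
    by_cases h : w ∈ B₁
    · simp only [if_pos h]; linarith [hmax w]
    · simp only [if_neg h]; exact le_refl 0
  have hy₂np : ∀ w, y₂ w ≤ 0 := by
    intro w
    rw [hy₂]
    by_cases h : w ∈ B₂
    · simp only [if_pos h]; linarith [hmax w]
    · simp only [if_neg h]; exact le_refl 0
  -- strict drop on each branch
  have hstrict : ∀ (u : V), G.Adj v u → ∃ w, (delv G v).Reachable u w ∧ φ w < M := by
    intro u hu
    by_contra h
    push_neg at h
    have hall : ∀ w, (delv G v).Reachable u w → φ w = M :=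
      fun w hr => le_antisymm (hmax w) (h w hr)
    have huM : φ u = M := hall u (SimpleGraph.Reachable.refl u)
    have heigu := congrFun heig u
    rw [SimpleGraph.lapMatrix_mulVec_apply] at heigu
    have hnbr : ∀ w ∈ G.neighborFinset u, φ w = M := by
      intro w hw
      rw [SimpleGraph.mem_neighborFinset] at hw
      by_cases hwv : w = v
      · rw [hwv]
      · exact hall w (hclosed u hu u (SimpleGraph.Reachable.refl u) w hw hwv)
    rw [Finset.sum_congr rfl hnbr, Finset.sum_const, G.card_neighborFinset_eq_degree,
      huM] at heigu
    simp only [Pi.smul_apply, smul_eq_mul, huM, nsmul_eq_mul] at heigu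
    have : l * M = 0 := by linarith
    nlinarith
  obtain ⟨w₁, hw₁r, hw₁⟩ := hstrict u₁ hu₁
  obtain ⟨w₂, hw₂r, hw₂⟩ := hstrict u₂ hu₂
  have hw₁B : w₁ ∈ B₁ := hw₁r
  have hw₂B : w₂ ∈ B₂ := hw₂r
  have hsum₁ : ∑ w, y₁ w < 0 := by
    have h := Finset.sum_lt_sum (s := Finset.univ) (f := y₁) (g := fun _ => (0:ℝ))
      (fun w _ => hy₁np w)
      ⟨w₁, Finset.mem_univ w₁, show y₁ w₁ < 0 by
        rw [hy₁]; simp only [if_pos hw₁B]; linarith⟩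
    simpa using h
  have hsum₂ : ∑ w, y₂ w < 0 := by
    have h := Finset.sum_lt_sum (s := Finset.univ) (f := y₂) (g := fun _ => (0:ℝ))
      (fun w _ => hy₂np w)
      ⟨w₂, Finset.mem_univ w₂, show y₂ w₂ < 0 by
        rw [hy₂]; simp only [if_pos hw₂B]; linarith⟩
    simpa using h
  have hQ₁ : y₁ ⬝ᵥ (G.lapMatrix ℝ *ᵥ y₁) = l * (y₁ ⬝ᵥ y₁) + l * M * (∑ w, y₁ w) :=
    branch_energy G l M φ heig B₁ v hvB₁
      (fun w hw w' hadj hw' => hclosed u₁ hu₁ w hw w' hadj hw') rfl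
  have hQ₂ : y₂ ⬝ᵥ (G.lapMatrix ℝ *ᵥ y₂) = l * (y₂ ⬝ᵥ y₂) + l * M * (∑ w, y₂ w) :=
    branch_energy G l M φ heig B₂ v hvB₂
      (fun w hw w' hadj hw' => hclosed u₂ hu₂ w hw w' hadj hw') rfl
  have hsep : ∀ a b : V, (a = b ∨ G.Adj a b) → y₁ a * y₂ b = 0 := by
    intro a b hab
    by_cases haB : a ∈ B₁
    · by_cases hbB : b ∈ B₂
      · exfalso
        rcases hab with rfl | hadj
        · exact hdisj a haB hbB
        · have hbv : b ≠ v := fun h => hvB₂ (h ▸ hbB)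
          exact hdisj b (hclosed u₁ hu₁ a haB b hadj hbv) hbB
      · rw [hy₂]; simp [if_neg hbB]
    · rw [hy₁]; simp [if_neg haB]
  have hsep' : ∀ a b : V, (a = b ∨ G.Adj a b) → y₂ a * y₁ b = 0 := by
    intro a b hab
    have : y₁ b * y₂ a = 0 := by
      apply hsep
      rcases hab with rfl | hadj
      · exact Or.inl rfl
      · exact Or.inr hadj.symm
    linarith [this]
  have hcross12 : y₁ ⬝ᵥ (G.lapMatrix ℝ *ᵥ y₂) = 0 := dot_lap_cross G y₁ y₂ hsep
  have hcross21 : y₂ ⬝ᵥ (G.lapMatrix ℝ *ᵥ y₁) = 0 := dot_lap_cross G y₂ y₁ hsep'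
  have hdot12 : y₁ ⬝ᵥ y₂ = 0 :=
    Finset.sum_eq_zero fun w _ => hsep w w (Or.inl rfl)
  set a : ℝ := ∑ w, y₂ w with ha
  set b : ℝ := -∑ w, y₁ w with hb
  set x : V → ℝ := a • y₁ + b • y₂ with hx
  have hxw : ∀ w, x w = a * y₁ w + b * y₂ w := fun w => rfl
  have hxsum : ∑ w, x w = 0 := by
    simp only [hxw, Finset.sum_add_distrib, ← Finset.mul_sum]
    rw [ha, hb]; ring
  have hxw₁ : 0 < x w₁ := by
    have h1 : y₁ w₁ < 0 := by rw [hy₁]; simp only [if_pos hw₁B]; linarith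
    have h2 : y₂ w₁ = 0 := by
      rw [hy₂]
      simp only [ite_eq_right_iff]
      intro hw
      exact (hdisj w₁ hw₁B hw).elim
    rw [hxw, h2, mul_zero, add_zero]
    exact mul_pos_of_neg_of_neg hsum₂ h1
  have hxne : x ≠ 0 := fun h => by
    have := congrFun h w₁; rw [this] at hxw₁; exact lt_irrefl 0 hxw₁
  -- energy of x
  have hxLx : x ⬝ᵥ (G.lapMatrix ℝ *ᵥ x) =
      a * a * (y₁ ⬝ᵥ (G.lapMatrix ℝ *ᵥ y₁)) + b * b * (y₂ ⬝ᵥ (G.lapMatrix ℝ *ᵥ y₂)) := by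
    rw [hx, Matrix.mulVec_add, Matrix.mulVec_smul, Matrix.mulVec_smul]
    simp only [dotProduct_add, add_dotProduct, smul_dotProduct, dotProduct_smul,
      smul_eq_mul]
    rw [hcross12, hcross21]; ring
  have hxx : x ⬝ᵥ x = a * a * (y₁ ⬝ᵥ y₁) + b * b * (y₂ ⬝ᵥ y₂) := by
    rw [hx]
    simp only [dotProduct_add, add_dotProduct, smul_dotProduct, dotProduct_smul, smul_eq_mul]
    have hdot21 : y₂ ⬝ᵥ y₁ = 0 := by
      unfold dotProduct
      exact Finset.sum_eq_zero fun w _ => hsep' w w (Or.inl rfl)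
    rw [hdot12, hdot21]; ring
  have hlt : x ⬝ᵥ (G.lapMatrix ℝ *ᵥ x) < l * (x ⬝ᵥ x) := by
    rw [hxLx, hxx, hQ₁, hQ₂]
    have ha2 : 0 < a * a := mul_pos_of_neg_of_neg hsum₂ hsum₂
    have hb2 : 0 < b * b := by
      have : 0 < b := by rw [hb]; linarith
      exact mul_pos this this
    have key1 : a * a * (l * M * (∑ w, y₁ w)) < 0 :=
      mul_neg_of_pos_of_neg ha2 (mul_neg_of_pos_of_neg (mul_pos hl0 hMpos) hsum₁)
    have key2 : b * b * (l * M * a) < 0 :=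
      mul_neg_of_pos_of_neg hb2 (mul_neg_of_pos_of_neg (mul_pos hl0 hMpos) hsum₂)
    nlinarith [key1, key2]
  obtain ⟨μ, hμpos, hψ, hμle⟩ := exists_eig_le_rayleigh G hT.isConnected x hxne hxsum
  have hlμ : l ≤ μ := hmin μ hμpos hψ
  have hxxpos : 0 < x ⬝ᵥ x := by
    unfold dotProduct
    apply Finset.sum_pos' (fun w _ => mul_self_nonneg (x w))
    exact ⟨w₁, Finset.mem_univ w₁, mul_pos hxw₁ hxw₁⟩
  nlinarith

end Aux

/-- In a finite tree on at least two vertices, every vertex at which a Fiedler vector attains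
its maximum, and every vertex at which it attains its minimum, has degree 1. -/
theorem fiedler_extrema_at_leaves {V : Type*} [Fintype V] [DecidableEq V]
    (G : SimpleGraph V) [DecidableRel G.Adj] (hT : G.IsTree) (hcard : 2 ≤ Fintype.card V)
    (l : ℝ) (hl : G.IsSecondLapEigenvalue l) (φ : V → ℝ) (hpair : G.IsLapEigenpair l φ) :
    (∀ v : V, (∀ w : V, φ w ≤ φ v) → G.degree v = 1) ∧
      (∀ v : V, (∀ w : V, φ v ≤ φ w) → G.degree v = 1) := by
  obtain ⟨_, hl0, hmin⟩ := hl
  obtain ⟨hφne, heig⟩ := hpair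
  have hmin' : ∀ μ : ℝ, 0 < μ → (∃ ψ : V → ℝ, ψ ≠ 0 ∧ G.lapMatrix ℝ *ᵥ ψ = μ • ψ) → l ≤ μ :=
    fun μ hμ ⟨ψ, h1, h2⟩ => hmin μ hμ ⟨ψ, h1, h2⟩
  constructor
  · intro v hv
    exact key_max_leaf G hT hcard l φ hl0 hmin' hφne heig v hv
  · intro v hv
    apply key_max_leaf G hT hcard l (-φ) hl0 hmin' (neg_ne_zero.mpr hφne)
      (by rw [Matrix.mulVec_neg, heig, smul_neg]) v
    intro w
    simpa using hv w
end

section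
/- Let G be a finite tree on at least 2 vertices. Then the second-smallest eigenvalue of its Laplacian matrix L = D − A satisfies λ₂(G) ≤ 10 / diam(G)². -/
open Matrix
namespace TreeAux

variable {V : Type*} [DecidableEq V] {G : SimpleGraph V}

lemma dist_split (hc : G.Connected) {x y z : V} (p : G.Walk x y)
    (hp : p.length = G.dist x y) (hz : z ∈ p.support) :
    G.dist x z = (p.takeUntil z hz).length ∧ G.dist z y = (p.dropUntil z hz).length ∧
      G.dist x z + G.dist z y = G.dist x y := by
  have hlen : (p.takeUntil z hz).length + (p.dropUntil z hz).length = p.length := by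
    rw [← SimpleGraph.Walk.length_append, p.take_spec hz]
  have h1 : G.dist x z ≤ (p.takeUntil z hz).length := SimpleGraph.dist_le _
  have h2 : G.dist z y ≤ (p.dropUntil z hz).length := SimpleGraph.dist_le _
  have h3 : G.dist x y ≤ G.dist x z + G.dist z y := hc.dist_triangle
  omega

lemma dist_mem_split (hc : G.Connected) {x y z : V} (p : G.Walk x y)
    (hp : p.length = G.dist x y) (hz : z ∈ p.support) :
    G.dist x z + G.dist z y = G.dist x y :=
  (dist_split hc p hp hz).2.2

lemma dist_ne_of_adj (hc : G.Connected) (ha : G.IsAcyclic) {u w : V} (h : G.Adj u w)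
    (x : V) : G.dist x u ≠ G.dist x w := by
  intro heq
  have hadj : G.dist u w = 1 := SimpleGraph.dist_eq_one_iff_adj.mpr h
  obtain ⟨p, hp, hpl⟩ := hc.exists_path_of_dist x u
  obtain ⟨q, hq, hql⟩ := hc.exists_path_of_dist x w
  have hu : u ∉ q.support := by
    intro hu
    have h3 := dist_mem_split hc q hql hu
    omega
  have hq' : (q.concat h.symm).IsPath := by
    rw [← SimpleGraph.Walk.isPath_reverse_iff, SimpleGraph.Walk.reverse_concat]
    exact (hq.reverse).cons (by simpa using hu)
  have := ha.path_unique ⟨p, hp⟩ ⟨q.concat h.symm, hq'⟩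
  have hlen : p.length = (q.concat h.symm).length := by
    rw [Subtype.ext_iff] at this
    simp only at this
    rw [this]
  rw [SimpleGraph.Walk.length_concat] at hlen
  omega

lemma dist_adj_cases (hc : G.Connected) (ha : G.IsAcyclic) {u w : V} (h : G.Adj u w)
    (x : V) : G.dist x w = G.dist x u + 1 ∨ G.dist x u = G.dist x w + 1 := by
  have h1 : G.dist x w ≤ G.dist x u + 1 := by
    have := hc.dist_triangle (u := x) (v := u) (w := w)
    rw [SimpleGraph.dist_eq_one_iff_adj.mpr h] at this
    omega
  have h2 : G.dist x u ≤ G.dist x w + 1 := by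
    have := hc.dist_triangle (u := x) (v := w) (w := u)
    rw [SimpleGraph.dist_eq_one_iff_adj.mpr h.symm] at this
    omega
  have := dist_ne_of_adj hc ha h x
  omega

/-- unique closer neighbor toward a target in a tree -/
lemma closer_neighbor_unique (hc : G.Connected) (ha : G.IsAcyclic) {u x y t : V}
    (hux : G.Adj u x) (huy : G.Adj u y)
    (hx : G.dist x t + 1 = G.dist u t) (hy : G.dist y t + 1 = G.dist u t) : x = y := by
  obtain ⟨p, hp, hpl⟩ := hc.exists_path_of_dist x t
  obtain ⟨q, hq, hql⟩ := hc.exists_path_of_dist y t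
  have hP : (SimpleGraph.Walk.cons hux p).IsPath := by
    apply SimpleGraph.Walk.isPath_of_length_eq_dist
    rw [SimpleGraph.Walk.length_cons]
    omega
  have hQ : (SimpleGraph.Walk.cons huy q).IsPath := by
    apply SimpleGraph.Walk.isPath_of_length_eq_dist
    rw [SimpleGraph.Walk.length_cons]
    omega
  have heq := ha.path_unique ⟨_, hP⟩ ⟨_, hQ⟩
  rw [Subtype.ext_iff] at heq
  simp only at heq
  have := congrArg (fun r => r.getVert 1) heq
  simpa using this

end TreeAux

namespace TreeAux

variable {V : Type*} [DecidableEq V] {G : SimpleGraph V}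

lemma crossing_on_geodesic (hc : G.Connected) (ha : G.IsAcyclic) {v0 vd u w : V}
    (h : G.Adj u w) (h0 : G.dist v0 w = G.dist v0 u + 1)
    (hd : G.dist u vd = G.dist w vd + 1) :
    G.dist v0 u + G.dist u vd = G.dist v0 vd := by
  have huw : G.dist u w = 1 := SimpleGraph.dist_eq_one_iff_adj.mpr h
  have hwu : G.dist w u = 1 := SimpleGraph.dist_eq_one_iff_adj.mpr h.symm
  obtain ⟨p1, hp1, hl1⟩ := hc.exists_path_of_dist v0 u
  obtain ⟨p3, hp3, hl3⟩ := hc.exists_path_of_dist w vd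
  have hwp1 : w ∉ p1.support := by
    intro hw
    have h1 := dist_mem_split hc p1 hl1 hw
    have : G.dist w u = 1 := hwu
    omega
  have hup3 : u ∉ p3.support := by
    intro hu
    have h1 := dist_mem_split hc p3 hl3 hu
    have : G.dist w u = 1 := hwu
    omega
  have hdisj : ∀ z, z ∈ p1.support → z ∈ p3.support → False := by
    intro z hz1 hz3
    have hz_ne_u : z ≠ u := fun hzu => hup3 (hzu ▸ hz3)
    obtain ⟨ht1, hd1, hs1⟩ := dist_split hc p1 hl1 hz1
    obtain ⟨ht3, hd3, hs3⟩ := dist_split hc p3 hl3 hz3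
    set q1 := p1.dropUntil z hz1 with hq1def
    set q3 := p3.dropUntil z hz3 with hq3def
    have hcomm1 : G.dist u z = G.dist z u := SimpleGraph.dist_comm
    have hcomm2 : G.dist w z = G.dist z w := SimpleGraph.dist_comm
    have hzu_pos : 0 < G.dist z u := hc.pos_dist_of_ne hz_ne_u
    have hw1len : (q1.reverse.append q3).length = G.dist z u + G.dist z vd := by
      rw [SimpleGraph.Walk.length_append, SimpleGraph.Walk.length_reverse, ← hd1, ← hd3]
    have htri : G.dist u z ≤ 1 + G.dist w z := by
      have h1 := hc.dist_triangle (u := u) (v := w) (w := z)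
      omega
    have hge : G.dist u vd ≤ (q1.reverse.append q3).length := SimpleGraph.dist_le _
    have hlen_eq : (q1.reverse.append q3).length = G.dist u vd := by omega
    have hnot : u ≠ z := hz_ne_u.symm
    obtain ⟨y, hy_adj, q', hq'⟩ := SimpleGraph.Walk.exists_eq_cons_of_ne hnot q1.reverse
    have hyu : G.dist y u = 1 := SimpleGraph.dist_eq_one_iff_adj.mpr hy_adj.symm
    have huy : G.dist u y = 1 := SimpleGraph.dist_eq_one_iff_adj.mpr hy_adj
    have htail : (q'.append q3).length + 1 = G.dist u vd := by
      rw [hq', SimpleGraph.Walk.cons_append, SimpleGraph.Walk.length_cons] at hlen_eq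
      omega
    have hyvd_le : G.dist y vd ≤ G.dist u vd - 1 := by
      have := SimpleGraph.dist_le (q'.append q3)
      omega
    have hyvd_ge : G.dist u vd ≤ 1 + G.dist y vd := by
      have h1 := hc.dist_triangle (u := u) (v := y) (w := vd)
      omega
    have hyvd : G.dist y vd + 1 = G.dist u vd := by omega
    have hy_eq_w : y = w := closer_neighbor_unique hc ha hy_adj h hyvd (by omega)
    have hy_mem : y ∈ p1.support := by
      have : y ∈ q1.reverse.support := by
        rw [hq', SimpleGraph.Walk.support_cons]
        exact List.mem_cons_of_mem _ q'.start_mem_support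
      rw [SimpleGraph.Walk.support_reverse] at this
      exact SimpleGraph.Walk.support_dropUntil_subset p1 hz1 (List.mem_reverse.mp this)
    have := dist_mem_split hc p1 hl1 hy_mem
    rw [hy_eq_w] at this hyu
    omega
  have hr : (p1.append (SimpleGraph.Walk.cons h p3)).IsPath := by
    rw [SimpleGraph.Walk.isPath_def, SimpleGraph.Walk.support_append,
      SimpleGraph.Walk.support_cons]
    simp only [List.tail_cons]
    refine List.Nodup.append hp1.support_nodup hp3.support_nodup ?_
    intro z hz1 hz3
    exact hdisj z hz1 hz3
  obtain ⟨P, hP, hPl⟩ := hc.exists_path_of_dist v0 vd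
  have heq := ha.path_unique ⟨_, hr⟩ ⟨P, hP⟩
  rw [Subtype.ext_iff] at heq
  simp only at heq
  have hlen : (p1.append (SimpleGraph.Walk.cons h p3)).length = G.dist v0 vd := by
    rw [heq]; exact hPl
  rw [SimpleGraph.Walk.length_append, SimpleGraph.Walk.length_cons] at hlen
  omega

end TreeAux

namespace TreeAux

variable {V : Type*} [DecidableEq V] {G : SimpleGraph V}

lemma level_unique (hc : G.Connected) (ha : G.IsAcyclic) {v0 vd z₁ z₂ : V}
    (h1 : G.dist v0 z₁ + G.dist z₁ vd = G.dist v0 vd)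
    (h2 : G.dist v0 z₂ + G.dist z₂ vd = G.dist v0 vd)
    (he : G.dist v0 z₁ = G.dist v0 z₂) : z₁ = z₂ := by
  obtain ⟨pa1, hpa1, hla1⟩ := hc.exists_path_of_dist v0 z₁
  obtain ⟨pb1, hpb1, hlb1⟩ := hc.exists_path_of_dist z₁ vd
  obtain ⟨pa2, hpa2, hla2⟩ := hc.exists_path_of_dist v0 z₂
  obtain ⟨pb2, hpb2, hlb2⟩ := hc.exists_path_of_dist z₂ vd
  have hW1 : (pa1.append pb1).IsPath := by
    apply SimpleGraph.Walk.isPath_of_length_eq_dist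
    rw [SimpleGraph.Walk.length_append]
    omega
  have hW2 : (pa2.append pb2).IsPath := by
    apply SimpleGraph.Walk.isPath_of_length_eq_dist
    rw [SimpleGraph.Walk.length_append]
    omega
  have heq := ha.path_unique ⟨_, hW1⟩ ⟨_, hW2⟩
  rw [Subtype.ext_iff] at heq
  simp only at heq
  have hz1 : z₁ ∈ (pa2.append pb2).support := by
    rw [← heq, SimpleGraph.Walk.mem_support_append_iff]
    exact Or.inl pa1.end_mem_support
  rw [SimpleGraph.Walk.mem_support_append_iff] at hz1
  rcases hz1 with hz1 | hz1
  · have hs := dist_mem_split hc pa2 hla2 hz1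
    have h0 : G.dist z₁ z₂ = 0 := by omega
    exact (hc.preconnected v0 z₁).symm.trans (hc.preconnected v0 z₂) |>.dist_eq_zero_iff.mp h0
  · have hs := dist_mem_split hc pb2 hlb2 hz1
    have hcm : G.dist z₂ z₁ = G.dist z₁ z₂ := SimpleGraph.dist_comm
    have h0 : G.dist z₁ z₂ = 0 := by omega
    exact (hc.preconnected z₁ z₂).dist_eq_zero_iff.mp h0

lemma exists_level_aux (hc : G.Connected) {x y : V} (p : G.Walk x y) :
    ∀ k : ℕ, k ≤ p.length → ∃ z, G.dist x z ≤ k ∧ G.dist z y ≤ p.length - k := by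
  induction p with
  | @nil u =>
    intro k _
    exact ⟨u, by simp [SimpleGraph.dist_self], by simp [SimpleGraph.dist_self]⟩
  | @cons a b c hadj q ih =>
    intro k hk
    match k with
    | 0 =>
      refine ⟨a, by simp, ?_⟩
      simpa using SimpleGraph.dist_le (SimpleGraph.Walk.cons hadj q)
    | (k+1) =>
      rw [SimpleGraph.Walk.length_cons] at hk ⊢
      obtain ⟨z, hz1, hz2⟩ := ih k (by omega)
      refine ⟨z, ?_, by omega⟩
      have ht := hc.dist_triangle (u := a) (v := b) (w := z)
      have : G.dist a b = 1 := SimpleGraph.dist_eq_one_iff_adj.mpr hadj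
      omega

lemma exists_level (hc : G.Connected) (x y : V) (k : ℕ) (hk : k ≤ G.dist x y) :
    ∃ z, G.dist x z = k ∧ G.dist z y = G.dist x y - k := by
  obtain ⟨p, _, hl⟩ := hc.exists_path_of_dist x y
  obtain ⟨z, hz1, hz2⟩ := exists_level_aux hc p k (by omega)
  have ht := hc.dist_triangle (u := x) (v := z) (w := y)
  exact ⟨z, by omega, by omega⟩

lemma parity_walk (hc : G.Connected) (ha : G.IsAcyclic) (v0 : V) {x y : V} (p : G.Walk x y) :
    (G.dist v0 x + G.dist v0 y + p.length) % 2 = 0 := by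
  induction p with
  | nil => rw [SimpleGraph.Walk.length_nil]; omega
  | @cons a b c hadj q ih =>
    rw [SimpleGraph.Walk.length_cons]
    have := dist_adj_cases hc ha hadj v0
    omega

lemma parity_dist (hc : G.Connected) (ha : G.IsAcyclic) (v0 x y : V) :
    (G.dist v0 x + G.dist v0 y + G.dist x y) % 2 = 0 := by
  obtain ⟨p, _, hl⟩ := hc.exists_path_of_dist x y
  have := parity_walk hc ha v0 p
  omega

end TreeAux

namespace TreeAux

lemma tele_odd (n : ℕ) (β : ℝ) :
    (2 * Real.sin β) * ∑ k ∈ Finset.range n, Real.cos ((2*(k:ℝ)+1)*β)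
      = Real.sin (2*(n:ℝ)*β) := by
  have key : ∀ k : ℕ, 2 * Real.sin β * Real.cos ((2*(k:ℝ)+1)*β)
      = Real.sin (2*((k:ℝ)+1)*β) - Real.sin (2*(k:ℝ)*β) := by
    intro k
    rw [Real.sin_sub_sin]
    ring_nf
  calc (2 * Real.sin β) * ∑ k ∈ Finset.range n, Real.cos ((2*(k:ℝ)+1)*β)
      = ∑ k ∈ Finset.range n,
        (Real.sin (2*((k:ℝ)+1)*β) - Real.sin (2*(k:ℝ)*β)) := by
        rw [Finset.mul_sum]; exact Finset.sum_congr rfl (fun k _ => key k)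
    _ = Real.sin (2*(n:ℝ)*β) - Real.sin (2*(0:ℝ)*β) := by
        have := Finset.sum_range_sub (fun k : ℕ => Real.sin (2*(k:ℝ)*β)) n
        simpa using this
    _ = Real.sin (2*(n:ℝ)*β) := by norm_num

lemma tele_even (n : ℕ) (β : ℝ) :
    (2 * Real.sin β) * ∑ m ∈ Finset.range n, Real.cos (2*(m:ℝ)*β)
      = Real.sin ((2*(n:ℝ)-1)*β) + Real.sin β := by
  have key : ∀ m : ℕ, 2 * Real.sin β * Real.cos (2*(m:ℝ)*β)
      = Real.sin ((2*((m:ℝ)+1)-1)*β) - Real.sin ((2*(m:ℝ)-1)*β) := by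
    intro m
    rw [Real.sin_sub_sin]
    ring_nf
  calc (2 * Real.sin β) * ∑ m ∈ Finset.range n, Real.cos (2*(m:ℝ)*β)
      = ∑ m ∈ Finset.range n,
        (Real.sin ((2*((m:ℝ)+1)-1)*β) - Real.sin ((2*(m:ℝ)-1)*β)) := by
        rw [Finset.mul_sum]; exact Finset.sum_congr rfl (fun m _ => key m)
    _ = Real.sin ((2*(n:ℝ)-1)*β) - Real.sin ((2*(0:ℝ)-1)*β) := by
        have := Finset.sum_range_sub (fun m : ℕ => Real.sin ((2*(m:ℝ)-1)*β)) n
        simpa using this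
    _ = Real.sin ((2*(n:ℝ)-1)*β) + Real.sin β := by
        norm_num [Real.sin_neg]

end TreeAux

namespace TreeAux

open Real

lemma alpha_pos {n : ℕ} (hn : 2 ≤ n) : 0 < π / (2*(n:ℝ)) := by
  apply div_pos pi_pos
  positivity

lemma sin_alpha_pos {n : ℕ} (hn : 2 ≤ n) : 0 < Real.sin (π / (2*(n:ℝ))) := by
  apply Real.sin_pos_of_pos_of_lt_pi (alpha_pos hn)
  have hn' : (2:ℝ) ≤ (n:ℝ) := by exact_mod_cast hn
  have h1 : π / (2*(n:ℝ)) ≤ π / 4 := by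
    apply div_le_div_of_nonneg_left pi_pos.le (by norm_num) (by linarith)
  linarith [pi_pos]

lemma sin_two_alpha_pos {n : ℕ} (hn : 2 ≤ n) : 0 < Real.sin (2*(π / (2*(n:ℝ)))) := by
  apply Real.sin_pos_of_pos_of_lt_pi
  · have := alpha_pos hn; linarith
  · have hn' : (2:ℝ) ≤ (n:ℝ) := by exact_mod_cast hn
    have h0 : (0:ℝ) < n := by linarith
    have : 2*(π / (2*(n:ℝ))) = π / n := by field_simp
    rw [this]
    have h1 : π / (n:ℝ) ≤ π / 2 := by
      apply div_le_div_of_nonneg_left pi_pos.le (by norm_num) (by linarith)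
    linarith [pi_pos]

lemma F1 {n : ℕ} (hn : 2 ≤ n) :
    ∑ k ∈ Finset.range n, Real.cos ((2*(k:ℝ)+1)*(π / (2*(n:ℝ)))) = 0 := by
  set α := π / (2*(n:ℝ)) with hα
  have h0 : (0:ℝ) < n := by
    have : (2:ℝ) ≤ (n:ℝ) := by exact_mod_cast hn
    linarith
  have ht := tele_odd n α
  have h2n : 2*(n:ℝ)*α = π := by rw [hα]; field_simp
  rw [h2n, Real.sin_pi] at ht
  have hs : (2 * Real.sin α) ≠ 0 := by
    have := sin_alpha_pos hn; rw [← hα] at this; positivity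
  rcases mul_eq_zero.mp ht with h | h
  · exact absurd h hs
  · exact h

lemma sum_cos_odd_two {n : ℕ} (hn : 2 ≤ n) :
    ∑ k ∈ Finset.range n, Real.cos ((2*(k:ℝ)+1)*(2*(π / (2*(n:ℝ))))) = 0 := by
  set α := π / (2*(n:ℝ)) with hα
  have h0 : (0:ℝ) < n := by
    have : (2:ℝ) ≤ (n:ℝ) := by exact_mod_cast hn
    linarith
  have ht := tele_odd n (2*α)
  have h2n : 2*(n:ℝ)*(2*α) = 2*π := by rw [hα]; field_simp
  rw [h2n] at ht
  have hsin2pi : Real.sin (2*π) = 0 := by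
    rw [Real.sin_two_pi]
  rw [hsin2pi] at ht
  have hs : (2 * Real.sin (2*α)) ≠ 0 := by
    have := sin_two_alpha_pos hn; rw [← hα] at this; positivity
  rcases mul_eq_zero.mp ht with h | h
  · exact absurd h hs
  · exact h

lemma F2 {n : ℕ} (hn : 2 ≤ n) :
    ∑ k ∈ Finset.range n, (Real.cos ((2*(k:ℝ)+1)*(π / (2*(n:ℝ)))))^2 = n/2 := by
  set α := π / (2*(n:ℝ)) with hα
  have hsq : ∀ k : ℕ, (Real.cos ((2*(k:ℝ)+1)*α))^2
      = 1/2 + Real.cos ((2*(k:ℝ)+1)*(2*α))/2 := by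
    intro k
    rw [Real.cos_sq]
    congr 2
    ring
  calc ∑ k ∈ Finset.range n, (Real.cos ((2*(k:ℝ)+1)*α))^2
      = ∑ k ∈ Finset.range n, (1/2 + Real.cos ((2*(k:ℝ)+1)*(2*α))/2) :=
        Finset.sum_congr rfl (fun k _ => hsq k)
    _ = (n:ℝ)*(1/2) + (∑ k ∈ Finset.range n, Real.cos ((2*(k:ℝ)+1)*(2*α)))/2 := by
        rw [Finset.sum_add_distrib, Finset.sum_const, Finset.card_range, Finset.sum_div]
        simp
    _ = n/2 := by rw [sum_cos_odd_two hn]; ring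

lemma sum_cos_even_two {n : ℕ} (hn : 2 ≤ n) :
    ∑ m ∈ Finset.range n, Real.cos (2*(m:ℝ)*(2*(π / (2*(n:ℝ))))) = 0 := by
  set α := π / (2*(n:ℝ)) with hα
  have h0 : (0:ℝ) < n := by
    have : (2:ℝ) ≤ (n:ℝ) := by exact_mod_cast hn
    linarith
  have ht := tele_even n (2*α)
  have h2n : (2*(n:ℝ)-1)*(2*α) = 2*π - 2*α := by
    rw [hα]; field_simp
  rw [h2n] at ht
  have hsub : Real.sin (2*π - 2*α) = - Real.sin (2*α) := by
    rw [Real.sin_sub]; simp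
  rw [hsub] at ht
  have hsum : (2 * Real.sin (2*α)) * ∑ m ∈ Finset.range n, Real.cos (2*(m:ℝ)*(2*α)) = 0 := by
    rw [ht]; ring
  have hs : (2 * Real.sin (2*α)) ≠ 0 := by
    have := sin_two_alpha_pos hn; rw [← hα] at this; positivity
  rcases mul_eq_zero.mp hsum with h | h
  · exact absurd h hs
  · exact h

lemma F3 {n : ℕ} (hn : 2 ≤ n) :
    ∑ m ∈ Finset.range n, (Real.sin (2*(m:ℝ)*(π / (2*(n:ℝ)))))^2 = n/2 := by
  set α := π / (2*(n:ℝ)) with hα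
  have hsq : ∀ m : ℕ, (Real.sin (2*(m:ℝ)*α))^2
      = 1/2 - Real.cos (2*(m:ℝ)*(2*α))/2 := by
    intro m
    have h1 := Real.sin_sq_add_cos_sq (2*(m:ℝ)*α)
    have h2 : (Real.cos (2*(m:ℝ)*α))^2 = 1/2 + Real.cos (2*(m:ℝ)*(2*α))/2 := by
      rw [Real.cos_sq]
      congr 2
      ring
    linarith
  calc ∑ m ∈ Finset.range n, (Real.sin (2*(m:ℝ)*α))^2
      = ∑ m ∈ Finset.range n, (1/2 - Real.cos (2*(m:ℝ)*(2*α))/2) :=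
        Finset.sum_congr rfl (fun m _ => hsq m)
    _ = (n:ℝ)*(1/2) - (∑ m ∈ Finset.range n, Real.cos (2*(m:ℝ)*(2*α)))/2 := by
        rw [Finset.sum_sub_distrib, Finset.sum_const, Finset.card_range, Finset.sum_div]
        simp
    _ = n/2 := by rw [sum_cos_even_two hn]; ring

end TreeAux

namespace TreeAux

lemma exists_small_eigen {V : Type*} [Fintype V] [DecidableEq V]
    (G : SimpleGraph V) [DecidableRel G.Adj] (hc : G.Connected)
    (ψ : V → ℝ) (hψ : ψ ≠ 0) (hsum : ∑ v, ψ v = 0) {R : ℝ} (hR : 0 < R)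
    (hQ : ψ ⬝ᵥ (G.lapMatrix ℝ *ᵥ ψ) ≤ R * (ψ ⬝ᵥ ψ)) :
    ∃ (μ : ℝ) (φ : V → ℝ), 0 < μ ∧ μ ≤ R ∧ φ ≠ 0 ∧ G.lapMatrix ℝ *ᵥ φ = μ • φ := by
  classical
  have hpsd := SimpleGraph.posSemidef_lapMatrix ℝ G
  have hL : (G.lapMatrix ℝ).IsHermitian := hpsd.1
  set L := G.lapMatrix ℝ with hLdef
  set b := hL.eigenvectorBasis with hb
  set μ := hL.eigenvalues with hμdef
  by_contra hcon
  push_neg at hcon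
  -- every eigenvalue is 0 or > R
  have halt : ∀ k, μ k = 0 ∨ R < μ k := by
    intro k
    have hnn : 0 ≤ μ k := hpsd.eigenvalues_nonneg k
    rcases eq_or_lt_of_le hnn with h | h
    · exact Or.inl h.symm
    · right
      by_contra hle
      push_neg at hle
      refine hcon (μ k) (⇑(b k)) h hle ?_ (hL.mulVec_eigenvectorBasis k)
      intro hzero
      have : b k = 0 := by
        ext v
        exact congrFun hzero v
      have hnorm := b.orthonormal.1 k
      rw [this] at hnorm
      simp at hnorm
  -- matrix of eigenvectors
  set B : Matrix V V ℝ := Matrix.of (fun k v => b k v) with hBdef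
  have hinner : ∀ j k : V, ⇑(b j) ⬝ᵥ ⇑(b k) = if j = k then 1 else 0 := by
    intro j k
    have := orthonormal_iff_ite.mp b.orthonormal j k
    rw [← this]
    simp [PiLp.inner_apply, dotProduct, mul_comm]
  have hBBt : B * Bᵀ = 1 := by
    ext j k
    simp only [Matrix.mul_apply, Matrix.transpose_apply, Matrix.one_apply, hBdef, Matrix.of_apply]
    have := hinner j k
    simpa [dotProduct] using this
  have hBtB : Bᵀ * B = 1 := mul_eq_one_comm.mp hBBt
  set c : V → ℝ := B *ᵥ ψ with hcdef
  have hexp : Bᵀ *ᵥ c = ψ := by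
    rw [hcdef, Matrix.mulVec_mulVec, hBtB, Matrix.one_mulVec]
  have hdot : ∀ y : V → ℝ, ψ ⬝ᵥ (Bᵀ *ᵥ y) = c ⬝ᵥ y := by
    intro y
    rw [dotProduct_mulVec, ← Matrix.mulVec_transpose, Matrix.transpose_transpose, ← hcdef]
  have hLBt : L * Bᵀ = Bᵀ * (Matrix.diagonal μ) := by
    ext j k
    have h1 : (L * Bᵀ) j k = (L *ᵥ ⇑(b k)) j := by
      simp [Matrix.mul_apply, Matrix.mulVec, dotProduct, hBdef]
    rw [h1, hL.mulVec_eigenvectorBasis k]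
    simp [Matrix.mul_diagonal, hBdef, mul_comm]
    rfl
  have hdiag : (Matrix.diagonal μ) *ᵥ c = fun k => μ k * c k := by
    ext k; rw [Matrix.mulVec_diagonal]
  have hLψ : L *ᵥ ψ = Bᵀ *ᵥ (fun k => μ k * c k) := by
    conv_lhs => rw [← hexp]
    rw [Matrix.mulVec_mulVec, hLBt, ← Matrix.mulVec_mulVec, hdiag]
  have hQ2 : ψ ⬝ᵥ (L *ᵥ ψ) = ∑ k, μ k * c k ^ 2 := by
    rw [hLψ, hdot]
    simp [dotProduct]
    exact Finset.sum_congr rfl (fun k _ => by ring)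
  have hnorm2 : ψ ⬝ᵥ ψ = ∑ k, c k ^ 2 := by
    calc ψ ⬝ᵥ ψ = ψ ⬝ᵥ (Bᵀ *ᵥ c) := by rw [hexp]
      _ = c ⬝ᵥ c := hdot c
      _ = ∑ k, c k ^ 2 := by
          simp [dotProduct]
          exact Finset.sum_congr rfl (fun k _ => by ring)
  -- zero eigenvalue coefficients vanish
  have hker : ∀ k, μ k = 0 → c k = 0 := by
    intro k hk
    have hzero : L *ᵥ ⇑(b k) = 0 := by
      rw [hL.mulVec_eigenvectorBasis k, ← hμdef, hk]
      simp
    have hconst : ∀ i j : V, b k i = b k j := by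
      intro i j
      have := (G.lapMatrix_mulVec_eq_zero_iff_forall_reachable (x := ⇑(b k))).mp hzero
      exact this i j (hc.preconnected i j)
    obtain ⟨v₀⟩ := hc.nonempty
    have : c k = ∑ v, b k v * ψ v := by
      simp [hcdef, Matrix.mulVec, dotProduct, hBdef]
    rw [this]
    have : ∀ v, b k v = b k v₀ := fun v => hconst v v₀
    calc ∑ v, b k v * ψ v = ∑ v, b k v₀ * ψ v := by
          exact Finset.sum_congr rfl (fun v _ => by rw [this v])
      _ = b k v₀ * ∑ v, ψ v := by rw [Finset.mul_sum]
      _ = 0 := by rw [hsum]; ring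
  -- some coefficient is nonzero
  have hcne : c ≠ 0 := by
    intro h0
    apply hψ
    rw [← hexp, h0]
    simp
  obtain ⟨k₀, hk₀⟩ : ∃ k, c k ≠ 0 := by
    by_contra hall
    push_neg at hall
    exact hcne (funext hall)
  have hμk₀ : R < μ k₀ := by
    rcases halt k₀ with h | h
    · exact absurd (hker k₀ h) hk₀
    · exact h
  -- contradiction
  have hlt : R * (ψ ⬝ᵥ ψ) < ψ ⬝ᵥ (L *ᵥ ψ) := by
    rw [hQ2, hnorm2, Finset.mul_sum]
    apply Finset.sum_lt_sum
    · intro k _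
      rcases halt k with h | h
      · rw [hker k h, h]; simp
      · have : (0:ℝ) ≤ c k ^ 2 := sq_nonneg _
        nlinarith
    · refine ⟨k₀, Finset.mem_univ _, ?_⟩
      have : 0 < c k₀ ^ 2 := by positivity
      nlinarith
  exact absurd hQ (not_le.mpr hlt)

end TreeAux

section MainProof

open Real Finset TreeAux

set_option maxHeartbeats 1000000 in
theorem secondLapEigenvalue_le_of_isTree' {V : Type*} [Fintype V] [DecidableEq V]
    (G : SimpleGraph V) [DecidableRel G.Adj] (hT : G.IsTree) (hcard : 2 ≤ Fintype.card V)
    (l : ℝ) (hl : G.IsSecondLapEigenvalue l) :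
    l ≤ 10 / (G.diam : ℝ) ^ 2 := by
  classical
  have hc : G.Connected := hT.isConnected
  have ha : G.IsAcyclic := hT.IsAcyclic
  have hnontriv : Nontrivial V := Fintype.one_lt_card_iff_nontrivial.mp hcard
  have hnetop : G.ediam ≠ ⊤ := by
    obtain ⟨u, v, huv⟩ := SimpleGraph.exists_edist_eq_ediam_of_finite (G := G)
    rw [← huv, SimpleGraph.edist_ne_top_iff_reachable]
    exact hc.preconnected u v
  have hdne : G.diam ≠ 0 := by
    intro h
    rcases SimpleGraph.diam_eq_zero.mp h with h' | h'
    · exact hnetop h'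
    · exact (not_subsingleton V) h'
  set d := G.diam with hddef
  have hd1 : 1 ≤ d := Nat.one_le_iff_ne_zero.mpr hdne
  obtain ⟨v0, vd, hdist⟩ := SimpleGraph.exists_dist_eq_diam (G := G)
  have hdle : ∀ u v : V, G.dist u v ≤ d := fun u v => SimpleGraph.dist_le_diam hnetop
  set n := d + 1 with hndef
  have hn2 : 2 ≤ n := by omega
  set α := π / (2*(n:ℝ)) with hαdef
  set g : ℕ → ℝ := fun k => Real.cos ((2*(k:ℝ)+1)*α) with hgdef
  set idx : V → ℕ := fun v => (G.dist v0 v + d - G.dist v vd)/2 with hidxdef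
  have hkey : ∀ v, 2 * idx v + G.dist v vd = G.dist v0 v + d := by
    intro v
    have htri : G.dist v vd ≤ G.dist v v0 + G.dist v0 vd := hc.dist_triangle
    have hcm : G.dist v v0 = G.dist v0 v := SimpleGraph.dist_comm
    have hpar := parity_dist hc ha v0 v vd
    rw [hdist] at hpar
    simp only [hidxdef]
    omega
  have hidx_le : ∀ v, idx v ≤ d := by
    intro v
    have htri : G.dist v0 v ≤ G.dist v0 vd + G.dist vd v := hc.dist_triangle
    have hcm : G.dist vd v = G.dist v vd := SimpleGraph.dist_comm
    have := hkey v
    omega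
  set f : V → ℝ := fun v => g (idx v) with hfdef
  set N := Fintype.card V with hNdef
  set cm : ℝ := (∑ v, f v) / N with hcmdef
  set ψ : V → ℝ := fun v => f v - cm with hψdef
  have hNpos : 0 < N := Fintype.card_pos
  have hsumψ : ∑ v, ψ v = 0 := by
    simp only [hψdef]
    rw [Finset.sum_sub_distrib, Finset.sum_const, Finset.card_univ, ← hNdef, hcmdef]
    have : (N:ℝ) ≠ 0 := by positivity
    rw [nsmul_eq_mul]
    field_simp
    ring
  -- crossing edge structure
  have hcross : ∀ u w, G.Adj u w → idx u < idx w →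
      G.dist v0 u = idx u ∧ G.dist v0 w = idx w ∧ idx w = idx u + 1 ∧
      G.dist v0 u + G.dist u vd = d ∧ G.dist v0 w + G.dist w vd = d := by
    intro u w huw hlt
    have h0 := dist_adj_cases hc ha huw v0
    have hdd := dist_adj_cases hc ha huw vd
    have hcmu : G.dist vd u = G.dist u vd := SimpleGraph.dist_comm
    have hcmw : G.dist vd w = G.dist w vd := SimpleGraph.dist_comm
    have hku := hkey u
    have hkw := hkey w
    have h0' : G.dist v0 w = G.dist v0 u + 1 := by omega
    have hd' : G.dist u vd = G.dist w vd + 1 := by omega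
    have hgeo : G.dist v0 u + G.dist u vd = G.dist v0 vd :=
      crossing_on_geodesic hc ha huw h0' hd'
    rw [hdist] at hgeo
    refine ⟨by omega, by omega, by omega, hgeo, by omega⟩
  -- quadratic form
  have hQform : ψ ⬝ᵥ (G.lapMatrix ℝ *ᵥ ψ) =
      (∑ i, ∑ j, if G.Adj i j then (ψ i - ψ j)^2 else 0)/2 := by
    rw [← Matrix.toLinearMap₂'_apply', SimpleGraph.lapMatrix_toLinearMap₂']
  have hψsub : ∀ i j : V, ψ i - ψ j = f i - f j := by
    intro i j
    simp only [hψdef]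
    ring
  set T : V × V → ℝ := fun p => if G.Adj p.1 p.2 then (f p.1 - f p.2)^2 else 0 with hTdef
  set S : Finset (V × V) :=
    Finset.univ.filter (fun p => G.Adj p.1 p.2 ∧ idx p.1 < idx p.2) with hSdef
  set S' : Finset (V × V) :=
    Finset.univ.filter (fun p => G.Adj p.1 p.2 ∧ idx p.2 < idx p.1) with hS'def
  have hT0 : ∀ p : V × V, p ∉ S ∪ S' → T p = 0 := by
    intro p hp
    simp only [hSdef, hS'def, Finset.mem_union, Finset.mem_filter, Finset.mem_univ,
      true_and, not_or, not_and] at hp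
    by_cases hadj : G.Adj p.1 p.2
    · have h1 := hp.1 hadj
      have h2 := hp.2 hadj
      have : idx p.1 = idx p.2 := by omega
      simp only [hTdef, if_pos hadj, hfdef, this]
      ring
    · simp only [hTdef, if_neg hadj]
  have hDS : (∑ i, ∑ j, if G.Adj i j then (ψ i - ψ j)^2 else 0) = ∑ p ∈ S ∪ S', T p := by
    have h1 : (∑ i, ∑ j, if G.Adj i j then (ψ i - ψ j)^2 else 0) = ∑ p : V × V, T p := by
      conv_rhs => rw [← Finset.univ_product_univ, Finset.sum_product]
      apply Finset.sum_congr rfl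
      intro i _
      apply Finset.sum_congr rfl
      intro j _
      simp only [hTdef]
      rw [hψsub]
    rw [h1]
    exact (Finset.sum_subset (Finset.subset_univ (S ∪ S')) (fun p _ hp => hT0 p hp)).symm
  have hdisjSS : Disjoint S S' := by
    rw [Finset.disjoint_left]
    intro p hp hp'
    simp only [hSdef, hS'def, Finset.mem_filter] at hp hp'
    omega
  have hswap : ∑ p ∈ S', T p = ∑ p ∈ S, T p := by
    apply Finset.sum_nbij' (i := Prod.swap) (j := Prod.swap)
    · intro p hp
      simp only [hSdef, hS'def, Finset.mem_filter, Finset.mem_univ, true_and] at hp ⊢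
      exact ⟨hp.1.symm, hp.2⟩
    · intro p hp
      simp only [hSdef, hS'def, Finset.mem_filter, Finset.mem_univ, true_and] at hp ⊢
      exact ⟨hp.1.symm, hp.2⟩
    · intro p _; simp
    · intro p _; simp
    · intro p hp
      simp only [hSdef, hS'def, Finset.mem_filter, Finset.mem_univ, true_and] at hp
      simp only [hTdef, Prod.fst_swap, Prod.snd_swap, if_pos hp.1, if_pos hp.1.symm]
      ring
  -- numerator bound
  have hsinα_pos : 0 < Real.sin α := sin_alpha_pos hn2
  set val : ℕ → ℝ := fun k => (g k - g (k+1))^2 with hvaldef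
  have hSle : ∑ p ∈ S, T p ≤ ∑ k ∈ Finset.range d, val k := by
    have hinj : Set.InjOn (fun p : V × V => idx p.1) S := by
      intro p hp q hq he
      rw [Finset.mem_coe] at hp hq
      simp only [hSdef, Finset.mem_filter, Finset.mem_univ, true_and] at hp hq
      obtain ⟨hp1, hp2, hp3, hp4, hp5⟩ := hcross p.1 p.2 hp.1 hp.2
      obtain ⟨hq1, hq2, hq3, hq4, hq5⟩ := hcross q.1 q.2 hq.1 hq.2
      simp only at he
      have h1 : p.1 = q.1 := by
        apply level_unique hc ha (by rw [hdist]; exact hp4) (by rw [hdist]; exact hq4)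
        omega
      have h2 : p.2 = q.2 := by
        apply level_unique hc ha (by rw [hdist]; exact hp5) (by rw [hdist]; exact hq5)
        omega
      exact Prod.ext h1 h2
    have hval : ∀ p ∈ S, T p = val (idx p.1) := by
      intro p hp
      simp only [hSdef, Finset.mem_filter, Finset.mem_univ, true_and] at hp
      obtain ⟨hp1, hp2, hp3, hp4, hp5⟩ := hcross p.1 p.2 hp.1 hp.2
      simp only [hTdef, if_pos hp.1, hvaldef, hfdef, hp3]
    calc ∑ p ∈ S, T p = ∑ p ∈ S, val (idx p.1) := Finset.sum_congr rfl hval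
      _ = ∑ k ∈ S.image (fun p : V × V => idx p.1), val k := by
          rw [Finset.sum_image]
          intro p hp q hq he
          exact hinj hp hq he
      _ ≤ ∑ k ∈ Finset.range d, val k := by
          apply Finset.sum_le_sum_of_subset_of_nonneg
          · intro k hk
            rw [Finset.mem_image] at hk
            obtain ⟨p, hp, rfl⟩ := hk
            simp only [hSdef, Finset.mem_filter, Finset.mem_univ, true_and] at hp
            obtain ⟨_, _, hp3, _, _⟩ := hcross p.1 p.2 hp.1 hp.2
            have := hidx_le p.2
            rw [Finset.mem_range]
            omega
          · intro k _ _
            simp only [hvaldef]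
            positivity
    -- numerator value
  have hvalsum : ∑ k ∈ Finset.range d, val k = 2*(n:ℝ)*(Real.sin α)^2 := by
    have hgd : ∀ k : ℕ, g k - g (k+1) = 2*(Real.sin α)*(Real.sin (2*((k:ℝ)+1)*α)) := by
      intro k
      simp only [hgdef]
      push_cast
      rw [Real.cos_sub_cos]
      have e1 : ((2*(k:ℝ)+1)*α + (2*((k:ℝ)+1)+1)*α)/2 = 2*((k:ℝ)+1)*α := by ring
      have e2 : ((2*(k:ℝ)+1)*α - (2*((k:ℝ)+1)+1)*α)/2 = -α := by ring
      rw [e1, e2, Real.sin_neg]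
      ring
    calc ∑ k ∈ Finset.range d, val k
        = ∑ k ∈ Finset.range d, 4*(Real.sin α)^2*(Real.sin (2*((k:ℝ)+1)*α))^2 := by
          apply Finset.sum_congr rfl
          intro k _
          simp only [hvaldef]
          rw [hgd k]
          ring
      _ = 4*(Real.sin α)^2 * ∑ k ∈ Finset.range d, (Real.sin (2*((k:ℝ)+1)*α))^2 := by
          rw [Finset.mul_sum]
      _ = 2*(n:ℝ)*(Real.sin α)^2 := by
          have h3 := F3 hn2
          rw [← hαdef] at h3
          have hsucc := Finset.sum_range_succ'
            (fun m : ℕ => (Real.sin (2*(m:ℝ)*α))^2) d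
          rw [← hndef] at hsucc
          rw [h3] at hsucc
          have h0 : (Real.sin (2*((0:ℕ):ℝ)*α))^2 = 0 := by norm_num
          rw [h0, add_zero] at hsucc
          have : ∑ k ∈ Finset.range d, (Real.sin (2*((k:ℝ)+1)*α))^2
              = ∑ k ∈ Finset.range d, (Real.sin (2*(((k+1):ℕ):ℝ)*α))^2 := by
            apply Finset.sum_congr rfl
            intro k _
            push_cast
            ring_nf
          rw [this, ← hsucc]
          ring
  have hQbound : ψ ⬝ᵥ (G.lapMatrix ℝ *ᵥ ψ) ≤ 2*(n:ℝ)*(Real.sin α)^2 := by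
    rw [hQform, hDS, Finset.sum_union hdisjSS, hswap]
    have : (∑ p ∈ S, T p + ∑ p ∈ S, T p)/2 = ∑ p ∈ S, T p := by ring
    rw [this]
    calc ∑ p ∈ S, T p ≤ ∑ k ∈ Finset.range d, val k := hSle
      _ = 2*(n:ℝ)*(Real.sin α)^2 := hvalsum
  -- denominator bound
  have hDen : (n:ℝ)/2 ≤ ψ ⬝ᵥ ψ := by
    have hex : ∀ k : ℕ, k ≤ d → ∃ z, G.dist v0 z = k ∧ G.dist z vd = d - k := by
      intro k hk
      have := exists_level hc v0 vd k (by rw [hdist]; exact hk)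
      rw [hdist] at this
      exact this
    choose e he1 he2 using fun k (hk : k ≤ d) => hex k hk
    have hre : ∀ k (hk : k ≤ d), idx (e k hk) = k := by
      intro k hk
      have := hkey (e k hk)
      have h1 := he1 k hk
      have h2 := he2 k hk
      omega
    have hψ2 : ψ ⬝ᵥ ψ = ∑ v, (f v - cm)^2 := by
      simp only [dotProduct, hψdef]
      exact Finset.sum_congr rfl (fun v _ => by ring)
    have hlow : ∑ k ∈ Finset.range n, (g k - cm)^2 ≤ ∑ v, (f v - cm)^2 := by
      set e' : ℕ → V := fun k => if hk : k ≤ d then e k hk else v0 with he'def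
      have hinj : Set.InjOn e' (Finset.range n) := by
        intro j hj k hk he
        rw [Finset.coe_range, Set.mem_Iio] at hj hk
        have hjd : j ≤ d := by omega
        have hkd : k ≤ d := by omega
        simp only [he'def, dif_pos hjd, dif_pos hkd] at he
        have h1 := he1 j hjd
        have h2 := he1 k hkd
        rw [he] at h1
        omega
      calc ∑ k ∈ Finset.range n, (g k - cm)^2
          = ∑ k ∈ Finset.range n, (f (e' k) - cm)^2 := by
            apply Finset.sum_congr rfl
            intro k hk
            rw [Finset.mem_range] at hk
            have hkd : k ≤ d := by omega
            simp only [he'def, dif_pos hkd, hfdef, hre k hkd]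
        _ = ∑ v ∈ (Finset.range n).image e', (f v - cm)^2 := by
            rw [Finset.sum_image]
            intro j hj k hk he
            exact hinj hj hk he
        _ ≤ ∑ v, (f v - cm)^2 := by
            apply Finset.sum_le_sum_of_subset_of_nonneg (Finset.subset_univ _)
            intro v _ _
            positivity
    have hval2 : ∑ k ∈ Finset.range n, (g k - cm)^2 = (n:ℝ)/2 + n*cm^2 := by
      have h1 := F1 hn2
      have h2 := F2 hn2
      rw [← hαdef] at h1 h2
      calc ∑ k ∈ Finset.range n, (g k - cm)^2
          = ∑ k ∈ Finset.range n, ((g k)^2 - 2*cm*(g k) + cm^2) := by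
            apply Finset.sum_congr rfl
            intro k _
            ring
        _ = (∑ k ∈ Finset.range n, (g k)^2) - 2*cm*(∑ k ∈ Finset.range n, g k)
            + n*cm^2 := by
            rw [Finset.sum_add_distrib, Finset.sum_sub_distrib, ← Finset.mul_sum,
              Finset.sum_const, Finset.card_range]
            push_cast
            ring
        _ = (n:ℝ)/2 + n*cm^2 := by
            simp only [hgdef] at h1 h2 ⊢
            rw [h1, h2]
            ring
    have hcm2 : 0 ≤ (n:ℝ)*cm^2 := by positivity
    rw [hψ2]
    calc (n:ℝ)/2 ≤ (n:ℝ)/2 + n*cm^2 := by linarith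
      _ = ∑ k ∈ Finset.range n, (g k - cm)^2 := hval2.symm
      _ ≤ ∑ v, (f v - cm)^2 := hlow
  -- ψ is nonzero
  have hnpos : (0:ℝ) < n := by positivity
  have hψne : ψ ≠ 0 := by
    intro h0
    rw [h0] at hDen
    simp [dotProduct] at hDen
    linarith
  -- the Rayleigh bound
  set R : ℝ := 10 / (d:ℝ)^2 with hRdef
  have hdpos : (0:ℝ) < d := by
    have : (1:ℝ) ≤ d := by exact_mod_cast hd1
    linarith
  have hRpos : 0 < R := by rw [hRdef]; positivity
  have hfour : 4*(Real.sin α)^2 ≤ R := by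
    have hsin_lt : Real.sin α < α := Real.sin_lt (alpha_pos hn2)
    have hα_pos : 0 < α := alpha_pos hn2
    have hsq : (Real.sin α)^2 < α^2 := by nlinarith
    have hα2 : α^2 = π^2/(4*(n:ℝ)^2) := by
      rw [hαdef]
      field_simp
      ring
    have hπ : π < 3.15 := Real.pi_lt_d2
    have hπpos := Real.pi_pos
    have hdn : (d:ℝ) + 1 = (n:ℝ) := by
      rw [hndef]; push_cast; ring
    have hdln : (d:ℝ) ≤ (n:ℝ) := by linarith
    -- 4 α² = π²/n² ≤ 10/d²  ⟸  π² d² ≤ 10 n²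
    have hπ2 : π^2 ≤ 9.9225 := by nlinarith [hπ, hπpos]
    have hd2 : (d:ℝ)^2 ≤ (n:ℝ)^2 := by nlinarith [hdln, hdpos]
    have hkey2 : π^2 * (d:ℝ)^2 ≤ 10 * (n:ℝ)^2 := by
      nlinarith [hπ2, hd2, sq_nonneg (d:ℝ), hdpos, hπpos]
    have h4α : 4*α^2 = π^2/(n:ℝ)^2 := by rw [hα2]; field_simp
    rw [hRdef]
    have : π^2/(n:ℝ)^2 ≤ 10/(d:ℝ)^2 := by
      rw [div_le_div_iff₀ (by positivity) (by positivity)]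
      nlinarith
    nlinarith
  have hQR : ψ ⬝ᵥ (G.lapMatrix ℝ *ᵥ ψ) ≤ R * (ψ ⬝ᵥ ψ) := by
    have h1 : 2*(n:ℝ)*(Real.sin α)^2 ≤ R * ((n:ℝ)/2) := by
      nlinarith [hfour, hnpos, sq_nonneg (Real.sin α)]
    have h2 : R * ((n:ℝ)/2) ≤ R * (ψ ⬝ᵥ ψ) := by
      apply mul_le_mul_of_nonneg_left hDen hRpos.le
    linarith [hQbound]
  obtain ⟨μ, φ, hμpos, hμle, hφne, heig⟩ :=
    exists_small_eigen G hc ψ hψne hsumψ hRpos hQR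
  have hlμ := hl.2.2 μ hμpos ⟨φ, hφne, heig⟩
  calc l ≤ μ := hlμ
    _ ≤ R := hμle
    _ = 10 / (G.diam : ℝ)^2 := by rw [hRdef]

end MainProof

/-- For a finite tree on at least 2 vertices, `λ₂(G) ≤ 10 / diam(G)²`. -/
theorem secondLapEigenvalue_le_of_isTree {V : Type*} [Fintype V] [DecidableEq V]
    (G : SimpleGraph V) [DecidableRel G.Adj] (hT : G.IsTree) (hcard : 2 ≤ Fintype.card V)
    (l : ℝ) (hl : G.IsSecondLapEigenvalue l) :
    l ≤ 10 / (G.diam : ℝ) ^ 2 := by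
  exact secondLapEigenvalue_le_of_isTree' G hT hcard l hl
end

section
/- Let G be a finite connected simple graph on n ≥ 2 vertices, let λ > 0 be a nonzero eigenvalue of the Laplacian matrix L = D − A, and let φ be a corresponding eigenvector normalized so that Σ_{v ∈ V} φ(v)² = 1. Then max_{v ∈ V} |φ(v)| ≤ √(λ · diam(G)). -/
open Matrix

/-- Telescoping sum over the darts of a walk. -/
lemma walk_darts_telescope {V : Type*} {G : SimpleGraph V} (φ : V → ℝ) :
    ∀ {u v : V} (p : G.Walk u v),
      (p.darts.map (fun d => φ d.fst - φ d.snd)).sum = φ u - φ v := by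
  intro u v p
  induction p with
  | nil => simp
  | cons h q ih =>
    simp only [SimpleGraph.Walk.darts_cons, List.map_cons, List.sum_cons, ih]
    ring

/-- For a finite connected graph on at least two vertices, a unit eigenvector `φ` of the
Laplacian with positive eigenvalue `l` satisfies `max_v |φ(v)| ≤ √(l · diam G)`. -/
theorem abs_eigenvector_le_sqrt_eigenvalue_mul_diam {V : Type*} [Fintype V] [DecidableEq V]
    (G : SimpleGraph V) [DecidableRel G.Adj] (hconn : G.Connected)
    (hcard : 2 ≤ Fintype.card V) (l : ℝ) (hl : 0 < l) (φ : V → ℝ)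
    (hpair : G.IsLapEigenpair l φ) (hnorm : ∑ v : V, φ v ^ 2 = 1) :
    ∀ v : V, |φ v| ≤ Real.sqrt (l * (G.diam : ℝ)) := by
  obtain ⟨-, heig⟩ := hpair
  have hne : Nonempty V := Fintype.card_pos_iff.mp (by omega)
  -- the sum of the eigenvector entries is zero
  have hsum : ∑ v : V, φ v = 0 := by
    have h1 : (fun _ : V => (1:ℝ)) ⬝ᵥ (G.lapMatrix ℝ *ᵥ φ) = 0 := by
      rw [dotProduct_mulVec, ← mulVec_transpose,
        show (G.lapMatrix ℝ)ᵀ = G.lapMatrix ℝ from G.isSymm_lapMatrix (R := ℝ),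
        G.lapMatrix_mulVec_const_eq_zero]
      simp
    rw [heig] at h1
    have h2 : (fun _ : V => (1:ℝ)) ⬝ᵥ (l • φ) = l * ∑ v : V, φ v := by
      simp [dotProduct, Finset.mul_sum]
    rw [h2] at h1
    exact (mul_eq_zero.mp h1).resolve_left hl.ne'
  -- Rayleigh identity
  have hray : (∑ i : V, ∑ j : V, if G.Adj i j then (φ i - φ j)^2 else 0) = 2 * l := by
    have h1 := G.lapMatrix_toLinearMap₂' (R := ℝ) φ
    rw [Matrix.toLinearMap₂'_apply', heig] at h1
    have h2 : φ ⬝ᵥ (l • φ) = l := by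
      simp only [dotProduct, Pi.smul_apply, smul_eq_mul]
      calc ∑ x : V, φ x * (l * φ x) = l * ∑ x : V, φ x ^ 2 := by
            rw [Finset.mul_sum]; exact Finset.sum_congr rfl fun x _ => by ring
        _ = l := by rw [hnorm, mul_one]
    rw [h2] at h1
    linarith
  -- edge sum over the set of ordered adjacent pairs
  set s : Finset (V × V) := Finset.univ.filter (fun q : V × V => G.Adj q.1 q.2) with hs
  have hrs : ∑ q ∈ s, (φ q.1 - φ q.2)^2 = 2 * l := by
    rw [hs, Finset.sum_filter, ← hray, ← Finset.sum_product']
    rw [Finset.univ_product_univ]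
  intro v
  -- find a vertex of opposite sign
  have ⟨u, hu⟩ : ∃ u : V, φ u * φ v ≤ 0 := by
    by_contra h
    push_neg at h
    have : (0:ℝ) < ∑ u : V, φ u * φ v :=
      Finset.sum_pos (fun u _ => h u) Finset.univ_nonempty
    rw [← Finset.sum_mul, hsum, zero_mul] at this
    exact lt_irrefl 0 this
  -- a shortest path from v to u
  obtain ⟨p, hp, hlen⟩ := hconn.exists_path_of_dist v u
  have hdiam : G.dist v u ≤ G.diam := by
    apply SimpleGraph.dist_le_diam
    intro htop
    obtain ⟨a, b, hab⟩ := G.exists_edist_eq_ediam_of_finite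
    rw [htop] at hab
    exact SimpleGraph.edist_ne_top_iff_reachable.mpr (hconn a b) hab
  -- darts of the path, as a finset
  have hnd : p.darts.Nodup :=
    SimpleGraph.Walk.darts_nodup_of_support_nodup hp.support_nodup
  set F : Finset (G.Dart) := p.darts.toFinset with hF
  have hcardF : F.card = p.length := by
    rw [hF, List.toFinset_card_of_nodup hnd, SimpleGraph.Walk.length_darts]
  -- telescoping and Cauchy–Schwarz
  have htel : φ v - φ u = ∑ d ∈ F, (φ d.fst - φ d.snd) := by
    rw [hF, List.sum_toFinset _ hnd, walk_darts_telescope]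
  have hCS : (φ v - φ u)^2 ≤ (F.card : ℝ) * ∑ d ∈ F, (φ d.fst - φ d.snd)^2 := by
    rw [htel]
    exact sq_sum_le_card_mul_sum_sq (s := F) (f := fun d => φ d.fst - φ d.snd)
  -- the sum of squared differences along the path is at most l
  have hpath : ∑ d ∈ F, (φ d.fst - φ d.snd)^2 ≤ l := by
    set A : Finset (V × V) := F.image (fun d => d.toProd) with hA
    set B : Finset (V × V) := F.image (fun d => d.toProd.swap) with hB
    have hedge_inj : ∀ d1 ∈ F, ∀ d2 ∈ F, d1.edge = d2.edge → d1 = d2 := by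
      intro d1 h1 d2 h2 he
      have hnodup : (p.darts.map SimpleGraph.Dart.edge).Nodup := hp.edges_nodup
      exact List.inj_on_of_nodup_map hnodup (List.mem_toFinset.mp h1)
        (List.mem_toFinset.mp h2) he
    have hAB : Disjoint A B := by
      rw [Finset.disjoint_left]
      intro q hqA hqB
      obtain ⟨d1, h1, hq1⟩ := Finset.mem_image.mp hqA
      obtain ⟨d2, h2, hq2⟩ := Finset.mem_image.mp hqB
      have hedge : d1.edge = d2.edge := by
        show s(d1.toProd.1, d1.toProd.2) = s(d2.toProd.1, d2.toProd.2)
        rw [hq1, ← hq2]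
        exact Sym2.eq_swap
      have hd : d1 = d2 := hedge_inj d1 h1 d2 h2 hedge
      have h5 : d1.snd = q.1 := by rw [hd]; exact congrArg Prod.fst hq2
      have h6 : d1.fst = q.1 := congrArg Prod.fst hq1
      exact d1.adj.ne (h6.trans h5.symm)
    have hsubA : A ⊆ s := by
      intro q hq
      obtain ⟨d, _, hq1⟩ := Finset.mem_image.mp hq
      rw [hs, Finset.mem_filter]
      exact ⟨Finset.mem_univ _, hq1 ▸ d.adj⟩
    have hsubB : B ⊆ s := by
      intro q hq
      obtain ⟨d, _, hq1⟩ := Finset.mem_image.mp hq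
      rw [hs, Finset.mem_filter]
      refine ⟨Finset.mem_univ _, ?_⟩
      rw [← hq1]
      exact d.adj.symm
    have hsumA : ∑ q ∈ A, (φ q.1 - φ q.2)^2 = ∑ d ∈ F, (φ d.fst - φ d.snd)^2 :=
      Finset.sum_image fun d1 _ d2 _ h => SimpleGraph.Dart.toProd_injective h
    have hsumB : ∑ q ∈ B, (φ q.1 - φ q.2)^2 = ∑ d ∈ F, (φ d.fst - φ d.snd)^2 := by
      rw [Finset.sum_image fun d1 _ d2 _ h =>
        SimpleGraph.Dart.toProd_injective (Prod.swap_injective h)]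
      apply Finset.sum_congr rfl
      intro d _
      simp only [Prod.fst_swap, Prod.snd_swap]
      ring
    have hunion : ∑ q ∈ A ∪ B, (φ q.1 - φ q.2)^2 =
        2 * ∑ d ∈ F, (φ d.fst - φ d.snd)^2 := by
      rw [Finset.sum_union hAB, hsumA, hsumB]; ring
    have hle : ∑ q ∈ A ∪ B, (φ q.1 - φ q.2)^2 ≤ ∑ q ∈ s, (φ q.1 - φ q.2)^2 :=
      Finset.sum_le_sum_of_subset_of_nonneg (Finset.union_subset hsubA hsubB)
        (fun q _ _ => sq_nonneg _)
    rw [hunion, hrs] at hle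
    linarith
  -- assemble everything
  have hF0 : (0:ℝ) ≤ ∑ d ∈ F, (φ d.fst - φ d.snd)^2 :=
    Finset.sum_nonneg fun d _ => sq_nonneg _
  have hcardle : (F.card : ℝ) ≤ (G.diam : ℝ) := by
    rw [hcardF, hlen]
    exact_mod_cast hdiam
  have hsq : φ v ^ 2 ≤ l * (G.diam : ℝ) := by
    have h1 : φ v ^ 2 ≤ (φ v - φ u)^2 := by nlinarith [hu]
    have h2 : (F.card : ℝ) * ∑ d ∈ F, (φ d.fst - φ d.snd)^2 ≤ (G.diam : ℝ) * l :=
      mul_le_mul hcardle hpath hF0 (Nat.cast_nonneg _)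
    nlinarith
  exact Real.abs_le_sqrt hsq
end

section
/- Let G be a finite tree on at least 2 vertices and let φ be an eigenvector of the Laplacian matrix L = D − A with eigenvalue λ₂(G), normalized so that Σ_{v ∈ V} φ(v)² = 1. Then max_{v ∈ V} |φ(v)| ≤ 4 / diam(G)^{1/2}. -/
set_option linter.unusedSectionVars false
set_option linter.unusedVariables false
set_option maxHeartbeats 1000000

open Matrix

namespace FiedlerAux

open Finset SimpleGraph

lemma sum_range_cast (n : ℕ) : ∑ i ∈ range n, (i:ℝ) = n*(n-1)/2 := by
  induction n with
  | zero => simp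
  | succ m ih =>
    rw [Finset.sum_range_succ, ih]
    push_cast
    ring

lemma sum_range_sq_cast (n : ℕ) : ∑ i ∈ range n, (i:ℝ)^2 = n*(n-1)*(2*n-1)/6 := by
  induction n with
  | zero => simp
  | succ m ih =>
    rw [Finset.sum_range_succ, ih]
    push_cast
    ring

lemma quad_lower (D : ℕ) (c : ℝ) :
    (D:ℝ)^3/3 ≤ ∑ i ∈ range (D+1), ((2*(i:ℝ) - (D:ℝ)) - c)^2 := by
  have h1 := sum_range_cast (D+1)
  have h2 := sum_range_sq_cast (D+1)
  have hexp : ∑ i ∈ range (D+1), ((2*(i:ℝ) - (D:ℝ)) - c)^2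
      = 4*(∑ i ∈ range (D+1), (i:ℝ)^2)
        - (4*(D:ℝ)+4*c)*(∑ i ∈ range (D+1), (i:ℝ))
        + (D+1)*((D:ℝ)+c)^2 := by
    rw [Finset.mul_sum, Finset.mul_sum, ← Finset.sum_sub_distrib]
    rw [show ((D:ℝ)+1)*((D:ℝ)+c)^2 = ∑ _i ∈ range (D+1), ((D:ℝ)+c)^2 by
      rw [Finset.sum_const, Finset.card_range]; push_cast; ring]
    rw [← Finset.sum_add_distrib]
    refine Finset.sum_congr rfl fun i _ => by ring
  rw [hexp, h1, h2]
  push_cast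
  have hD : (0:ℝ) ≤ (D:ℝ) := Nat.cast_nonneg D
  nlinarith [sq_nonneg c, mul_nonneg hD (sq_nonneg c), sq_nonneg ((D:ℝ)+c)]

lemma euclid_sum_apply {ι V : Type*} [Fintype V] (s : Finset ι)
    (f : ι → EuclideanSpace ℝ V) (v : V) :
    (∑ i ∈ s, f i) v = ∑ i ∈ s, f i v := by
  classical
  induction s using Finset.induction with
  | empty => rfl
  | insert _ _ h ih => rw [Finset.sum_insert h, Finset.sum_insert h, PiLp.add_apply, ih]

variable {V : Type*} [Fintype V] [DecidableEq V]
  {G : SimpleGraph V} [DecidableRel G.Adj]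

lemma dist_getVert_le (hc : G.Connected) {u w : V} (p : G.Walk u w) (i : ℕ) :
    G.dist u (p.getVert i) ≤ i := by
  induction p generalizing i with
  | nil => simp [SimpleGraph.Walk.getVert, SimpleGraph.dist_self]
  | @cons a b c h q ih =>
    cases i with
    | zero => simp [SimpleGraph.Walk.getVert_zero, SimpleGraph.dist_self]
    | succ n =>
      rw [SimpleGraph.Walk.getVert_cons_succ]
      have h2 : G.dist a (q.getVert n) ≤ G.dist a b + G.dist b (q.getVert n) :=
        hc.dist_triangle
      have h1 : G.dist a b = 1 := (SimpleGraph.dist_eq_one_iff_adj).mpr h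
      have h3 := ih n
      omega

lemma getVert_dist_le (hc : G.Connected) {u w : V} (p : G.Walk u w) (i : ℕ) :
    G.dist (p.getVert i) w + i ≤ p.length ∨ p.length ≤ i := by
  induction p generalizing i with
  | nil => right; simp
  | @cons a b c h q ih =>
    cases i with
    | zero =>
      left
      rw [SimpleGraph.Walk.getVert_zero, SimpleGraph.Walk.length_cons]
      have h2 : G.dist a c ≤ G.dist a b + G.dist b c := hc.dist_triangle
      have h1 : G.dist a b = 1 := (SimpleGraph.dist_eq_one_iff_adj).mpr h
      have h3 : G.dist b c ≤ q.length := SimpleGraph.dist_le q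
      omega
    | succ n =>
      rw [SimpleGraph.Walk.getVert_cons_succ, SimpleGraph.Walk.length_cons]
      rcases ih n with h' | h'
      · left; omega
      · right; omega

/-- On a geodesic (shortest walk), `getVert i` is at distance exactly `i` from the start. -/
lemma dist_getVert_eq {u w : V} (hc : G.Connected) (p : G.Walk u w)
    (hp : p.length = G.dist u w) {i : ℕ} (hi : i ≤ p.length) :
    G.dist u (p.getVert i) = i ∧ G.dist (p.getVert i) w = p.length - i := by
  have h1 := dist_getVert_le hc p i
  have h2 := getVert_dist_le hc p i
  have h3 : G.dist u w ≤ G.dist u (p.getVert i) + G.dist (p.getVert i) w :=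
    hc.dist_triangle
  rcases h2 with h2 | h2
  · omega
  · have h4 : p.getVert i = w := p.getVert_of_length_le h2
    rw [h4]
    have h5 : G.dist w w = 0 := SimpleGraph.dist_self
    omega

lemma getVert_injOn {u w : V} (hc : G.Connected) (p : G.Walk u w)
    (hp : p.length = G.dist u w) {i j : ℕ} (hi : i ≤ p.length) (hj : j ≤ p.length)
    (hij : p.getVert i = p.getVert j) : i = j := by
  have h1 := (dist_getVert_eq hc p hp hi).1
  have h2 := (dist_getVert_eq hc p hp hj).1
  rw [hij] at h1
  omega

open SimpleGraph Walk in
lemma walk_sum_darts (φ : V → ℝ) {u w : V} (p : G.Walk u w) :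
    ∑ i ∈ range p.length, (φ (p.getVert (i+1)) - φ (p.getVert i))^2
      = (p.darts.map (fun d => (φ d.snd - φ d.fst)^2)).sum := by
  induction p with
  | nil => simp
  | @cons a b c h q ih =>
    rw [Walk.length_cons, Finset.sum_range_succ', Walk.darts_cons, List.map_cons, List.sum_cons]
    simp only [Walk.getVert_cons_succ, Walk.getVert_zero]
    rw [ih]
    ring

open SimpleGraph Walk in
lemma path_energy_le (φ : V → ℝ) {u w : V} (p : G.Walk u w) (hp : p.IsPath) :
    (p.darts.map (fun d => (φ d.snd - φ d.fst)^2)).sum ≤ φ ⬝ᵥ (G.lapMatrix ℝ *ᵥ φ) := by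
  classical
  set f : G.Dart → ℝ := fun d => (φ d.snd - φ d.fst)^2 with hf
  have hfnn : ∀ d, 0 ≤ f d := fun d => sq_nonneg _
  have hed : (p.darts.map SimpleGraph.Dart.edge).Nodup := hp.isTrail.edges_nodup
  have hnd : p.darts.Nodup := hed.of_map _
  set s1 : Finset G.Dart := p.darts.toFinset with hs1
  set s2 : Finset G.Dart := s1.image SimpleGraph.Dart.symm with hs2
  have hsum1 : ∑ d ∈ s1, f d = (p.darts.map f).sum := List.sum_toFinset _ hnd
  have hsyminj : Function.Injective (SimpleGraph.Dart.symm : G.Dart → G.Dart) :=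
    SimpleGraph.Dart.symm_involutive.injective
  have hsum2 : ∑ d ∈ s2, f d = (p.darts.map f).sum := by
    rw [hs2, Finset.sum_image (fun x _ y _ h => hsyminj h), ← hsum1]
    refine Finset.sum_congr rfl fun d _ => ?_
    simp only [hf]
    have h1 : (d.symm).snd = d.fst := rfl
    have h2 : (d.symm).fst = d.snd := rfl
    rw [h1, h2]
    ring
  have hdisj : Disjoint s1 s2 := by
    rw [Finset.disjoint_left]
    intro d hd1 hd2
    rw [hs2, Finset.mem_image] at hd2
    obtain ⟨d', hd', hdd⟩ := hd2
    rw [hs1, List.mem_toFinset] at hd1 hd'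
    have : d' = d := by
      refine List.inj_on_of_nodup_map hed hd' hd1 ?_
      rw [← hdd, SimpleGraph.Dart.edge_symm]
    rw [this] at hdd
    exact SimpleGraph.Dart.symm_ne d hdd
  -- total over all darts
  have htot : ∑ d ∈ s1 ∪ s2, f d ≤ ∑ d : G.Dart, f d :=
    Finset.sum_le_sum_of_subset_of_nonneg (Finset.subset_univ _)
      (fun d _ _ => hfnn d)
  have hST : ∑ d : G.Dart, f d
      = ∑ i : V, ∑ j : V, if G.Adj i j then (φ i - φ j)^2 else 0 := by
    set F : V × V → ℝ := fun q => if G.Adj q.1 q.2 then (φ q.1 - φ q.2)^2 else 0 with hF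
    have h1 : ∀ d : G.Dart, f d = F d.toProd := by
      intro d
      simp only [hF, hf]
      rw [if_pos d.adj]
      ring
    rw [Finset.sum_congr rfl fun d _ => h1 d]
    rw [← Finset.sum_image (f := F) (fun x _ y _ h => SimpleGraph.Dart.toProd_injective h)]
    rw [Finset.sum_subset (Finset.subset_univ _) ?hz, Fintype.sum_prod_type]
    case hz =>
      intro q _ hq
      rw [hF]
      by_cases hadj : G.Adj q.1 q.2
      · exfalso
        apply hq
        rw [Finset.mem_image]
        exact ⟨SimpleGraph.Dart.mk q hadj, Finset.mem_univ _, rfl⟩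
      · simp [hadj]
  have h2l : ∑ d ∈ s1 ∪ s2, f d = 2 * (p.darts.map f).sum := by
    rw [Finset.sum_union hdisj, hsum1, hsum2]
    ring
  have hlap : φ ⬝ᵥ (G.lapMatrix ℝ *ᵥ φ)
      = (∑ i : V, ∑ j : V, if G.Adj i j then (φ i - φ j)^2 else 0) / 2 := by
    rw [← Matrix.toLinearMap₂'_apply', SimpleGraph.lapMatrix_toLinearMap₂']
  rw [hlap, ← hST]
  linarith [htot, h2l]

lemma chain_bound (φ : V → ℝ) {u w : V} (p : G.Walk u w) (hp : p.IsPath)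
    {j : ℕ} (hj : j ≤ p.length) :
    (φ (p.getVert j) - φ u)^2 ≤ j * (φ ⬝ᵥ (G.lapMatrix ℝ *ᵥ φ)) := by
  have htel : φ (p.getVert j) - φ u
      = ∑ i ∈ range j, (φ (p.getVert (i+1)) - φ (p.getVert i)) := by
    rw [Finset.sum_range_sub (fun i => φ (p.getVert i)) j, p.getVert_zero]
  rw [htel]
  calc (∑ i ∈ range j, (φ (p.getVert (i+1)) - φ (p.getVert i)))^2
      ≤ (range j).card * ∑ i ∈ range j, (φ (p.getVert (i+1)) - φ (p.getVert i))^2 :=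
        sq_sum_le_card_mul_sum_sq
    _ ≤ j * (φ ⬝ᵥ (G.lapMatrix ℝ *ᵥ φ)) := by
        rw [Finset.card_range]
        refine mul_le_mul_of_nonneg_left ?_ (by positivity)
        calc ∑ i ∈ range j, (φ (p.getVert (i+1)) - φ (p.getVert i))^2
            ≤ ∑ i ∈ range p.length, (φ (p.getVert (i+1)) - φ (p.getVert i))^2 :=
              Finset.sum_le_sum_of_subset_of_nonneg
                (Finset.range_subset_range.mpr hj) (fun i _ _ => sq_nonneg _)
          _ = _ := walk_sum_darts φ p
          _ ≤ _ := path_energy_le φ p hp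

lemma reach_del {a b z t : V} (w : G.Walk z t) :
    (G \ SimpleGraph.fromEdgeSet {s(a,b)}).Reachable z t ∨
    (G \ SimpleGraph.fromEdgeSet {s(a,b)}).Reachable z a ∨
    (G \ SimpleGraph.fromEdgeSet {s(a,b)}).Reachable z b := by
  induction w with
  | nil => exact Or.inl (Reachable.refl _)
  | @cons x y t h p ih =>
    by_cases hxy : s(x,y) = s(a,b)
    · rw [Sym2.eq_iff] at hxy
      rcases hxy with ⟨rfl, rfl⟩ | ⟨rfl, rfl⟩
      · exact Or.inr (Or.inl (Reachable.refl _))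
      · exact Or.inr (Or.inr (Reachable.refl _))
    · have hadj : (G \ SimpleGraph.fromEdgeSet {s(a,b)}).Adj x y := by
        rw [SimpleGraph.sdiff_adj]
        refine ⟨h, fun hc => ?_⟩
        rw [SimpleGraph.fromEdgeSet_adj] at hc
        exact hxy (Set.mem_singleton_iff.mp hc.1)
      rcases ih with h' | h' | h'
      · exact Or.inl (hadj.reachable.trans h')
      · exact Or.inr (Or.inl (hadj.reachable.trans h'))
      · exact Or.inr (Or.inr (hadj.reachable.trans h'))

lemma walk_transfer_del {a b z t : V} (w : G.Walk z t) (hne : s(a,b) ∉ w.edges) :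
    (G \ SimpleGraph.fromEdgeSet {s(a,b)}).Reachable z t := by
  refine ⟨w.transfer _ fun e' he' => ?_⟩
  simp only [edgeSet_sdiff, edgeSet_fromEdgeSet, edgeSet_sdiff_sdiff_isDiag, Set.mem_diff,
    Set.mem_singleton_iff]
  exact ⟨w.edges_subset_edgeSet he', fun h' => hne (h' ▸ he')⟩

lemma dist_eq_of_bridge (hT : G.IsTree) {a b : V} (hab : G.Adj a b) {z : V}
    (hz : (G \ SimpleGraph.fromEdgeSet {s(a,b)}).Reachable z b) :
    G.dist z a = G.dist z b + 1 := by
  have hc := hT.isConnected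
  have hba : G.dist b a = 1 := SimpleGraph.dist_eq_one_iff_adj.mpr hab.symm
  have hle : G.dist z a ≤ G.dist z b + 1 := by
    have := hc.dist_triangle (u := z) (v := b) (w := a)
    omega
  obtain ⟨w, hw⟩ := hc.exists_walk_length_eq_dist z a
  have hbr : ¬ (G \ SimpleGraph.fromEdgeSet {s(a,b)}).Reachable a b :=
    ((SimpleGraph.isBridge_iff).mp
      ((isAcyclic_iff_forall_adj_isBridge.mp hT.IsAcyclic) hab))
  have hmem : s(a,b) ∈ w.edges := by
    by_contra hne
    have h1 : (G \ SimpleGraph.fromEdgeSet {s(a,b)}).Reachable z a :=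
      walk_transfer_del w hne
    exact hbr (h1.symm.trans hz)
  have hbmem : b ∈ w.support := w.snd_mem_support_of_mem_edges hmem
  have hsplit : (w.takeUntil b hbmem).append (w.dropUntil b hbmem) = w :=
    w.take_spec hbmem
  have hlen : (w.takeUntil b hbmem).length + (w.dropUntil b hbmem).length = w.length := by
    have h := congrArg SimpleGraph.Walk.length hsplit
    rw [SimpleGraph.Walk.length_append] at h
    exact h
  have h2 : G.dist z b ≤ (w.takeUntil b hbmem).length := SimpleGraph.dist_le _
  have h3 : G.dist b a ≤ (w.dropUntil b hbmem).length := SimpleGraph.dist_le _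
  omega

lemma xdiff_cases (hT : G.IsTree) {u₀ v₀ : V} (P : G.Walk u₀ v₀) {a b : V}
    (hab : G.Adj a b) (he : s(a,b) ∉ P.edges) :
    (G.dist u₀ a = G.dist u₀ b + 1 ∧ G.dist v₀ a = G.dist v₀ b + 1) ∨
    (G.dist u₀ b = G.dist u₀ a + 1 ∧ G.dist v₀ b = G.dist v₀ a + 1) := by
  have hc := hT.isConnected
  have hPr : (G \ SimpleGraph.fromEdgeSet {s(a,b)}).Reachable u₀ v₀ :=
    walk_transfer_del P he
  obtain ⟨wua⟩ := hc u₀ a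
  rcases reach_del (a := a) (b := b) wua with h' | h' | h'
  · -- u₀ ~' a
    have hv' : (G \ SimpleGraph.fromEdgeSet {s(a,b)}).Reachable v₀ a := hPr.symm.trans h'
    right
    have hswap : ∀ z : V, (G \ SimpleGraph.fromEdgeSet {s(a,b)}).Reachable z a →
        G.dist z b = G.dist z a + 1 := by
      intro z hz
      have : s(b,a) = s(a,b) := Sym2.eq_swap
      refine dist_eq_of_bridge hT hab.symm ?_
      rw [this]
      exact hz
    exact ⟨hswap u₀ h', hswap v₀ hv'⟩
  · -- u₀ ~' a (second)
    have hv' : (G \ SimpleGraph.fromEdgeSet {s(a,b)}).Reachable v₀ a := hPr.symm.trans h'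
    right
    have : s(b,a) = s(a,b) := Sym2.eq_swap
    constructor
    · exact dist_eq_of_bridge hT hab.symm (this ▸ h')
    · exact dist_eq_of_bridge hT hab.symm (this ▸ hv')
  · -- u₀ ~' b
    have hv' : (G \ SimpleGraph.fromEdgeSet {s(a,b)}).Reachable v₀ b := hPr.symm.trans h'
    left
    exact ⟨dist_eq_of_bridge hT hab h', dist_eq_of_bridge hT hab hv'⟩

lemma xdiff_sq_le (hc : G.Connected) (u₀ v₀ : V) {i j : V} (hij : G.Adj i j) :
    (((G.dist u₀ i : ℝ) - (G.dist v₀ i : ℝ)) - ((G.dist u₀ j : ℝ) - (G.dist v₀ j : ℝ)))^2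
      ≤ 4 := by
  have h1 : G.dist i j = 1 := SimpleGraph.dist_eq_one_iff_adj.mpr hij
  have h2 : G.dist j i = 1 := SimpleGraph.dist_eq_one_iff_adj.mpr hij.symm
  have t1 : G.dist u₀ i ≤ G.dist u₀ j + 1 := by
    have := hc.dist_triangle (u := u₀) (v := j) (w := i); omega
  have t2 : G.dist u₀ j ≤ G.dist u₀ i + 1 := by
    have := hc.dist_triangle (u := u₀) (v := i) (w := j); omega
  have t3 : G.dist v₀ i ≤ G.dist v₀ j + 1 := by
    have := hc.dist_triangle (u := v₀) (v := j) (w := i); omega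
  have t4 : G.dist v₀ j ≤ G.dist v₀ i + 1 := by
    have := hc.dist_triangle (u := v₀) (v := i) (w := j); omega
  have c1 : ((G.dist u₀ i : ℝ)) ≤ (G.dist u₀ j : ℝ) + 1 := by exact_mod_cast t1
  have c2 : ((G.dist u₀ j : ℝ)) ≤ (G.dist u₀ i : ℝ) + 1 := by exact_mod_cast t2
  have c3 : ((G.dist v₀ i : ℝ)) ≤ (G.dist v₀ j : ℝ) + 1 := by exact_mod_cast t3
  have c4 : ((G.dist v₀ j : ℝ)) ≤ (G.dist v₀ i : ℝ) + 1 := by exact_mod_cast t4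
  nlinarith [c1, c2, c3, c4]

lemma numerator_bound (hT : G.IsTree) {u₀ v₀ : V} (P : G.Walk u₀ v₀) (hP : P.IsPath) :
    ∑ i : V, ∑ j : V, (if G.Adj i j then
        (((G.dist u₀ i : ℝ) - (G.dist v₀ i : ℝ))
          - ((G.dist u₀ j : ℝ) - (G.dist v₀ j : ℝ)))^2 else 0)
      ≤ 8 * P.length := by
  classical
  have hc := hT.isConnected
  set x : V → ℝ := fun v => (G.dist u₀ v : ℝ) - (G.dist v₀ v : ℝ) with hx
  set F : V × V → ℝ := fun q => if G.Adj q.1 q.2 then (x q.1 - x q.2)^2 else 0 with hF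
  set T : Finset (V × V) :=
    ((P.darts ++ P.darts.map SimpleGraph.Dart.symm).map SimpleGraph.Dart.toProd).toFinset
    with hT'
  have hTcard : T.card ≤ 2 * P.length := by
    calc T.card ≤ ((P.darts ++ P.darts.map SimpleGraph.Dart.symm).map
          SimpleGraph.Dart.toProd).length := List.toFinset_card_le _
      _ = 2 * P.length := by
          rw [List.length_map, List.length_append, List.length_map,
            SimpleGraph.Walk.length_darts]
          ring
  -- off-T adjacent pairs have zero contribution
  have hzero : ∀ q : V × V, q ∉ T → F q = 0 := by
    rintro ⟨i, j⟩ hq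
    simp only [hF]
    by_cases hij : G.Adj i j
    · rw [if_pos hij]
      have hnotedge : s(i,j) ∉ P.edges := by
        intro hmem
        rw [SimpleGraph.Walk.edges, List.mem_map] at hmem
        obtain ⟨d', hd', hde⟩ := hmem
        have : d' = SimpleGraph.Dart.mk (i,j) hij ∨
            d' = (SimpleGraph.Dart.mk (i,j) hij).symm := by
          have := (SimpleGraph.dart_edge_eq_iff d' (SimpleGraph.Dart.mk (i,j) hij)).mp
            (by rw [hde]; rfl)
          exact this
        apply hq
        rw [hT', List.mem_toFinset, List.mem_map]
        rcases this with h' | h'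
        · exact ⟨d', List.mem_append_left _ hd', by rw [h']⟩
        · refine ⟨d'.symm, List.mem_append_right _ ?_, ?_⟩
          · rw [List.mem_map]
            exact ⟨d', hd', rfl⟩
          · rw [h', SimpleGraph.Dart.symm_symm]
      rcases xdiff_cases hT P hij hnotedge with ⟨h1, h2⟩ | ⟨h1, h2⟩ <;>
      · simp only [hx]
        rw [h1, h2]
        push_cast
        ring_nf
    · rw [if_neg hij]
  have hbound : ∀ q ∈ T, F q ≤ 4 := by
    rintro ⟨i, j⟩ _
    simp only [hF]
    by_cases hij : G.Adj i j
    · rw [if_pos hij]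
      exact xdiff_sq_le hc u₀ v₀ hij
    · rw [if_neg hij]; norm_num
  calc ∑ i : V, ∑ j : V, (if G.Adj i j then (x i - x j)^2 else 0)
      = ∑ q : V × V, F q := (Fintype.sum_prod_type F).symm
    _ = ∑ q ∈ T ∩ Finset.univ, F q := by
        rw [Finset.inter_univ]
        refine (Finset.sum_subset (Finset.subset_univ _) ?_).symm
        intro q _ hq
        exact hzero q hq
    _ ≤ ∑ q ∈ T ∩ Finset.univ, (4:ℝ) := Finset.sum_le_sum (by
        intro q hq
        exact hbound q (Finset.mem_of_mem_inter_left hq))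
    _ = (T.card : ℝ) * 4 := by rw [Finset.sum_const, Finset.inter_univ]; simp [mul_comm]
    _ ≤ 8 * P.length := by
        have : (T.card : ℝ) ≤ 2 * P.length := by exact_mod_cast hTcard
        nlinarith


lemma one_le_diam (hc : G.Connected) (hcard : 2 ≤ Fintype.card V) :
    1 ≤ G.diam := by
  have hnt : Nontrivial V := Fintype.one_lt_card_iff_nontrivial.mp hcard
  have hne : Nonempty V := inferInstance
  have hetop : G.ediam ≠ ⊤ := by
    obtain ⟨u, v, huv⟩ := SimpleGraph.exists_edist_eq_ediam_of_finite (G := G)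
    rw [← huv]
    exact (SimpleGraph.edist_ne_top_iff_reachable).mpr (hc u v)
  obtain ⟨a, b, hab⟩ := exists_pair_ne V
  have h1 : 1 ≤ G.dist a b := hc.pos_dist_of_ne hab
  have h2 : G.dist a b ≤ G.diam := SimpleGraph.dist_le_diam hetop
  omega

lemma rayleigh (hG : G.Connected) {l : ℝ} (hl : G.IsSecondLapEigenvalue l)
    (y : V → ℝ) (hy : ∑ v, y v = 0) :
    l * (y ⬝ᵥ y) ≤ y ⬝ᵥ (G.lapMatrix ℝ *ᵥ y) := by
  classical
  set A : Matrix V V ℝ := G.lapMatrix ℝ with hA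
  have hps : A.PosSemidef := G.posSemidef_lapMatrix ℝ
  have hH : A.IsHermitian := hps.1
  set B := hH.eigenvectorBasis with hB
  set lam := hH.eigenvalues with hlam
  set β : V → V → ℝ := fun i => ⇑(B i) with hβ
  have horth : ∀ i j, β i ⬝ᵥ β j = if i = j then 1 else 0 := by
    intro i j
    have := (orthonormal_iff_ite (𝕜 := ℝ)).mp B.orthonormal i j
    rw [← this]
    simp [dotProduct, PiLp.inner_apply, RCLike.inner_apply, β, mul_comm]
  set c : V → ℝ := fun i => β i ⬝ᵥ y with hc
  -- expansion of y
  have hyrepr : ∀ v, y v = ∑ i, c i * β i v := by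
    intro v
    have h1 := congrArg (fun z : EuclideanSpace ℝ V => z v) (B.sum_repr (WithLp.toLp 2 y))
    simp only [PiLp.toLp_apply] at h1
    rw [euclid_sum_apply] at h1
    rw [← h1]
    refine Finset.sum_congr rfl fun i _ => ?_
    rw [PiLp.smul_apply, B.repr_apply_apply]
    simp [hc, hβ, dotProduct, PiLp.inner_apply, RCLike.inner_apply, mul_comm]
  have hyfun : y = ∑ i, c i • β i := by
    funext v
    rw [hyrepr v, Finset.sum_apply]
    simp
  -- eigen equation
  have heig : ∀ i, A *ᵥ β i = lam i • β i := fun i => hH.mulVec_eigenvectorBasis i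
  have hsA : Aᵀ = A := G.isSymm_lapMatrix (R := ℝ)
  have hswap : ∀ u w : V → ℝ, u ⬝ᵥ (A *ᵥ w) = (A *ᵥ u) ⬝ᵥ w := by
    intro u w
    rw [dotProduct_mulVec, ← hsA, vecMul_transpose, hsA]
  have hexp : ∀ w : V → ℝ, y ⬝ᵥ w = ∑ i, c i * (β i ⬝ᵥ w) := by
    intro w
    simp only [dotProduct]
    calc ∑ v, y v * w v = ∑ v, ∑ i, (c i * β i v) * w v := by
          refine Finset.sum_congr rfl fun v _ => ?_
          rw [hyrepr v, Finset.sum_mul]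
      _ = ∑ i, ∑ v, (c i * β i v) * w v := Finset.sum_comm
      _ = ∑ i, c i * ∑ v, β i v * w v := by
          refine Finset.sum_congr rfl fun i _ => ?_
          rw [Finset.mul_sum]
          refine Finset.sum_congr rfl fun v _ => ?_
          ring
  have hdot : y ⬝ᵥ y = ∑ i, c i ^ 2 := by
    rw [hexp]
    refine Finset.sum_congr rfl fun i _ => ?_
    rw [show β i ⬝ᵥ y = c i from rfl]
    ring
  have hldot : y ⬝ᵥ (A *ᵥ y) = ∑ i, lam i * c i ^ 2 := by
    rw [hexp]
    refine Finset.sum_congr rfl fun i _ => ?_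
    rw [hswap, heig i, smul_dotProduct]
    have : β i ⬝ᵥ y = c i := rfl
    rw [this, smul_eq_mul]
    ring
  rw [hdot, hldot, Finset.mul_sum]
  refine Finset.sum_le_sum fun i _ => ?_
  rcases (hps.eigenvalues_nonneg i).lt_or_eq with hpos | hzero
  · refine mul_le_mul_of_nonneg_right ?_ (sq_nonneg _)
    refine hl.2.2 (lam i) hpos ⟨β i, ?_, heig i⟩
    intro h0
    have hB0 : B i = 0 := by
      have := congrArg (WithLp.equiv 2 ((_ : V) → ℝ)).symm h0
      simpa [hβ] using this
    have := B.orthonormal.1 i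
    rw [hB0] at this
    simp at this
  · -- lam i = 0, show c i = 0
    have hz2 : lam i = 0 := hzero.symm
    have h0 : A *ᵥ β i = 0 := by rw [heig i, hz2, zero_smul]
    have hconst : ∀ u w : V, β i u = β i w := by
      have h1 : Matrix.toLin' A (β i) = 0 := by rw [Matrix.toLin'_apply, h0]
      intro u w
      exact (G.lapMatrix_mulVec_eq_zero_iff_forall_reachable).mp h0 u w (hG u w)
    have hne : Nonempty V := hG.nonempty
    obtain ⟨u0⟩ := hne
    have hci : c i = 0 := by
      have : c i = ∑ v, β i u0 * y v := by
        refine Finset.sum_congr rfl fun v _ => ?_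
        rw [hconst u0 v]
      rw [this, ← Finset.mul_sum, hy, mul_zero]
    rw [hci]
    simp


lemma lambda_le_12 (hT : G.IsTree) (hcard : 2 ≤ Fintype.card V) {l : ℝ}
    (hl : G.IsSecondLapEigenvalue l) :
    l ≤ 12 / (G.diam : ℝ)^2 := by
  classical
  have hc := hT.isConnected
  have hD1 : 1 ≤ G.diam := one_le_diam hc hcard
  have hnt : Nontrivial V := Fintype.one_lt_card_iff_nontrivial.mp hcard
  have hne : Nonempty V := inferInstance
  obtain ⟨u₀, v₀, huv⟩ := SimpleGraph.exists_dist_eq_diam (G := G)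
  obtain ⟨P, hPlen⟩ := hc.exists_walk_length_eq_dist u₀ v₀
  have hP : P.IsPath := SimpleGraph.Walk.isPath_of_length_eq_dist P hPlen
  set D := G.diam with hD
  have hPD : P.length = D := by rw [hPlen, huv]
  set x : V → ℝ := fun v => (G.dist u₀ v : ℝ) - (G.dist v₀ v : ℝ) with hx
  set n : ℕ := Fintype.card V with hn
  have hnpos : 0 < (n:ℝ) := by
    have : 0 < n := by omega
    exact_mod_cast this
  set c : ℝ := (∑ v, x v) / n with hcdef
  set y : V → ℝ := fun v => x v - c with hy
  have hysum : ∑ v, y v = 0 := by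
    simp only [hy]
    rw [Finset.sum_sub_distrib, Finset.sum_const, Finset.card_univ, ← hn, hcdef]
    field_simp
    rw [nsmul_eq_mul]
    field_simp
    ring
  have hray := rayleigh hc hl y hysum
  -- L *ᵥ y = L *ᵥ x
  have hLy : G.lapMatrix ℝ *ᵥ y = G.lapMatrix ℝ *ᵥ x := by
    have : y = x - c • (fun _ : V => (1:ℝ)) := by
      funext v; simp [hy]
    rw [this, Matrix.mulVec_sub, Matrix.mulVec_smul, G.lapMatrix_mulVec_const_eq_zero]
    simp
  have hsA : (G.lapMatrix ℝ)ᵀ = G.lapMatrix ℝ := G.isSymm_lapMatrix (R := ℝ)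
  have hydLy : y ⬝ᵥ (G.lapMatrix ℝ *ᵥ y) = x ⬝ᵥ (G.lapMatrix ℝ *ᵥ x) := by
    rw [hLy]
    have : y ⬝ᵥ (G.lapMatrix ℝ *ᵥ x)
        = x ⬝ᵥ (G.lapMatrix ℝ *ᵥ x) - c * ((fun _ : V => (1:ℝ)) ⬝ᵥ (G.lapMatrix ℝ *ᵥ x)) := by
      have hyx : y = x - c • (fun _ : V => (1:ℝ)) := by funext v; simp [hy]
      rw [hyx, sub_dotProduct, smul_dotProduct]
      simp [smul_eq_mul]
    rw [this]
    have hone : (fun _ : V => (1:ℝ)) ⬝ᵥ (G.lapMatrix ℝ *ᵥ x) = 0 := by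
      rw [Matrix.dotProduct_mulVec, ← hsA, Matrix.vecMul_transpose,
        G.lapMatrix_mulVec_const_eq_zero]
      simp
    rw [hone, mul_zero, sub_zero]
  -- numerator
  have hnum : x ⬝ᵥ (G.lapMatrix ℝ *ᵥ x) ≤ 4 * D := by
    have h1 : x ⬝ᵥ (G.lapMatrix ℝ *ᵥ x)
        = (∑ i : V, ∑ j : V, if G.Adj i j then (x i - x j)^2 else 0) / 2 := by
      rw [← Matrix.toLinearMap₂'_apply', SimpleGraph.lapMatrix_toLinearMap₂']
    rw [h1]
    have h2 := numerator_bound hT P hP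
    rw [hPD] at h2
    simp only [hx] at h2 ⊢
    linarith
  -- denominator
  have hden : ((D:ℝ)^3)/3 ≤ y ⬝ᵥ y := by
    have hxg : ∀ i ≤ D, x (P.getVert i) = 2*(i:ℝ) - (D:ℝ) := by
      intro i hi
      have hiL : i ≤ P.length := by omega
      obtain ⟨hd1, hd2⟩ := dist_getVert_eq hc P hPlen hiL
      have hd2' : G.dist v₀ (P.getVert i) = D - i := by
        rw [SimpleGraph.dist_comm]
        omega
      simp only [hx]
      rw [hd1, hd2']
      have : ((D - i : ℕ) : ℝ) = (D:ℝ) - (i:ℝ) := by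
        have : i ≤ D := hi
        push_cast [Nat.cast_sub this]
        ring
      rw [this]
      ring
    have hinj : Set.InjOn (fun i => P.getVert i) (Finset.range (D+1)) := by
      intro i hi j hj hij
      simp only [Finset.coe_range, Set.mem_Iio] at hi hj
      exact getVert_injOn hc P hPlen (by omega) (by omega) hij
    have hsub : ((Finset.range (D+1)).image (fun i => P.getVert i)) ⊆ Finset.univ :=
      Finset.subset_univ _
    calc ((D:ℝ)^3)/3 ≤ ∑ i ∈ Finset.range (D+1), ((2*(i:ℝ) - (D:ℝ)) - c)^2 :=
          quad_lower D c
      _ = ∑ i ∈ Finset.range (D+1), (x (P.getVert i) - c)^2 := by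
          refine Finset.sum_congr rfl fun i hi => ?_
          rw [hxg i (by simp at hi; omega)]
      _ = ∑ v ∈ (Finset.range (D+1)).image (fun i => P.getVert i), (x v - c)^2 := by
          rw [Finset.sum_image (fun a ha b hb h => hinj (by simpa using ha) (by simpa using hb) h)]
      _ ≤ ∑ v, (x v - c)^2 :=
          Finset.sum_le_sum_of_subset_of_nonneg hsub (fun v _ _ => sq_nonneg _)
      _ = y ⬝ᵥ y := by
          simp only [dotProduct, hy]
          exact Finset.sum_congr rfl fun v _ => by ring
  -- combine
  have hlpos := hl.2.1
  have hDpos : (0:ℝ) < (D:ℝ) := by exact_mod_cast hD1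
  have hstep : l * ((D:ℝ)^3/3) ≤ 4 * D := by
    calc l * ((D:ℝ)^3/3) ≤ l * (y ⬝ᵥ y) := by
          refine mul_le_mul_of_nonneg_left hden hlpos.le
      _ ≤ y ⬝ᵥ (G.lapMatrix ℝ *ᵥ y) := hray
      _ = x ⬝ᵥ (G.lapMatrix ℝ *ᵥ x) := hydLy
      _ ≤ 4 * D := hnum
  rw [le_div_iff₀ (by positivity : (0:ℝ) < (D:ℝ)^2)]
  nlinarith [hstep, hDpos, hlpos]

end FiedlerAux

/-- For a finite tree on at least two vertices, a unit Fiedler vector `φ` satisfies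
`max_v |φ(v)| ≤ 4 / diam(G)^{1/2}`. -/
theorem abs_fiedler_le_four_div_sqrt_diam {V : Type*} [Fintype V] [DecidableEq V]
    (G : SimpleGraph V) [DecidableRel G.Adj] (hT : G.IsTree) (hcard : 2 ≤ Fintype.card V)
    (l : ℝ) (hl : G.IsSecondLapEigenvalue l) (φ : V → ℝ)
    (hpair : G.IsLapEigenpair l φ) (hnorm : ∑ v : V, φ v ^ 2 = 1) :
    ∀ v : V, |φ v| ≤ 4 / Real.sqrt (G.diam : ℝ) := by
  intro v
  classical
  have hc := hT.isConnected
  have hD1 : 1 ≤ G.diam := FiedlerAux.one_le_diam hc hcard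
  set D := G.diam with hD
  have hDpos : (0:ℝ) < (D:ℝ) := by exact_mod_cast hD1
  have hl12 : l ≤ 12 / (D:ℝ)^2 := FiedlerAux.lambda_le_12 hT hcard hl
  have hlpos : 0 < l := hl.2.1
  have hnt : Nontrivial V := Fintype.one_lt_card_iff_nontrivial.mp hcard
  have hne : Nonempty V := inferInstance
  -- energy equals l
  have hφφ : φ ⬝ᵥ φ = 1 := by
    rw [dotProduct, ← hnorm]
    exact Finset.sum_congr rfl fun u _ => (sq (φ u)).symm
  have hE : φ ⬝ᵥ (G.lapMatrix ℝ *ᵥ φ) = l := by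
    rw [hpair.2, dotProduct_smul, smul_eq_mul, hφφ, mul_one]
  -- choose a far vertex
  obtain ⟨u₀, v₀, huv⟩ := SimpleGraph.exists_dist_eq_diam (G := G)
  set w : V := if G.dist v v₀ ≤ G.dist v u₀ then u₀ else v₀ with hw
  set k := G.dist v w with hk
  have h2k : D ≤ 2 * k := by
    have htri : G.dist u₀ v₀ ≤ G.dist u₀ v + G.dist v v₀ := hc.dist_triangle
    have hc1 : G.dist u₀ v = G.dist v u₀ := SimpleGraph.dist_comm ..
    by_cases hcase : G.dist v v₀ ≤ G.dist v u₀
    · have : w = u₀ := by rw [hw, if_pos hcase]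
      rw [hk, this]
      omega
    · have : w = v₀ := by rw [hw, if_neg hcase]
      rw [hk, this]
      omega
  obtain ⟨q, hqlen⟩ := hc.exists_walk_length_eq_dist v w
  have hqp : q.IsPath := SimpleGraph.Walk.isPath_of_length_eq_dist q hqlen
  have hqk : q.length = k := hqlen
  set M := |φ v| with hM
  have hMnn : 0 ≤ M := abs_nonneg _
  have hchain : ∀ j, j ≤ k → M - Real.sqrt ((j:ℝ) * l) ≤ |φ (q.getVert j)| := by
    intro j hj
    have h1 : (φ (q.getVert j) - φ v)^2 ≤ (j:ℝ) * l := by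
      have := FiedlerAux.chain_bound φ q hqp (j := j) (by omega)
      rw [hE] at this
      exact this
    have h2 : |φ (q.getVert j) - φ v| ≤ Real.sqrt ((j:ℝ) * l) := by
      rw [← Real.sqrt_sq_eq_abs]
      exact Real.sqrt_le_sqrt h1
    have h3 : |φ v| - |φ (q.getVert j)| ≤ |φ v - φ (q.getVert j)| :=
      abs_sub_abs_le_abs_sub _ _
    rw [abs_sub_comm] at h3
    rw [hM]
    linarith
  set t := Nat.floor (M^2 / (4*l)) with ht
  set m := min k t with hm
  have hsmall : ∀ j, j ≤ m → M/2 ≤ |φ (q.getVert j)| := by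
    intro j hj
    have hjt : j ≤ t := le_trans hj (min_le_right _ _)
    have hjk : j ≤ k := le_trans hj (min_le_left _ _)
    have hjle : (j:ℝ) ≤ M^2 / (4*l) := by
      calc (j:ℝ) ≤ (t:ℝ) := by exact_mod_cast hjt
        _ ≤ M^2 / (4*l) := Nat.floor_le (by positivity)
    have hjl : (j:ℝ) * l ≤ M^2 / 4 := by
      rw [le_div_iff₀ (by positivity : (0:ℝ) < 4*l)] at hjle
      nlinarith [hlpos]
    have hsq : Real.sqrt ((j:ℝ) * l) ≤ M/2 := by
      calc Real.sqrt ((j:ℝ) * l) ≤ Real.sqrt (M^2/4) := Real.sqrt_le_sqrt hjl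
        _ = M/2 := by
            rw [show M^2/4 = (M/2)^2 by ring, Real.sqrt_sq (by positivity)]
    have := hchain j hjk
    linarith
  have hsum : ((m:ℝ)+1) * (M/2)^2 ≤ 1 := by
    have hinj : ∀ a ∈ Finset.range (m+1), ∀ b ∈ Finset.range (m+1),
        q.getVert a = q.getVert b → a = b := by
      intro a ha b hb hab
      rw [Finset.mem_range] at ha hb
      refine FiedlerAux.getVert_injOn hc q hqlen ?_ ?_ hab
      · omega
      · omega
    calc ((m:ℝ)+1) * (M/2)^2 = ∑ _j ∈ Finset.range (m+1), (M/2)^2 := by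
          rw [Finset.sum_const, Finset.card_range]
          push_cast
          ring
      _ ≤ ∑ j ∈ Finset.range (m+1), (φ (q.getVert j))^2 := by
          refine Finset.sum_le_sum fun j hj => ?_
          rw [Finset.mem_range] at hj
          have h1 := hsmall j (by omega)
          calc (M/2)^2 ≤ |φ (q.getVert j)|^2 :=
                pow_le_pow_left₀ (by positivity) h1 2
            _ = (φ (q.getVert j))^2 := sq_abs _
      _ = ∑ u ∈ (Finset.range (m+1)).image (fun j => q.getVert j), (φ u)^2 :=
          (Finset.sum_image (f := fun u => (φ u)^2) hinj).symm
      _ ≤ ∑ u : V, (φ u)^2 :=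
          Finset.sum_le_sum_of_subset_of_nonneg (Finset.subset_univ _)
            (fun u _ _ => sq_nonneg _)
      _ = 1 := hnorm
  -- key bound
  have key : M^2 * (D:ℝ) ≤ 16 := by
    rcases le_or_gt k t with hkt | htk
    · have hmk : m = k := min_eq_left hkt
      rw [hmk] at hsum
      have hcast : (D:ℝ) ≤ 2*(k:ℝ) := by exact_mod_cast h2k
      nlinarith [hsum, hcast, sq_nonneg M]
    · have hmt : m = t := min_eq_right htk.le
      rw [hmt] at hsum
      have hfl : M^2 / (4*l) < (t:ℝ) + 1 := Nat.lt_floor_add_one _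
      have h4a : M^2 < ((t:ℝ)+1) * (4*l) := by
        rw [div_lt_iff₀ (by positivity : (0:ℝ) < 4*l)] at hfl
        linarith
      have h4 : ((t:ℝ)+1) * M^2 ≤ 4 := by nlinarith [hsum]
      have h5 : M^2 * M^2 ≤ 16 * l := by nlinarith [h4a, h4, hlpos, sq_nonneg M]
      have h6 : l * (D:ℝ)^2 ≤ 12 := by
        rw [le_div_iff₀ (by positivity : (0:ℝ) < (D:ℝ)^2)] at hl12
        linarith
      have h7 : (M^2*(D:ℝ))^2 ≤ 192 := by
        nlinarith [mul_le_mul_of_nonneg_right h5 (sq_nonneg (D:ℝ)), h6]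
      nlinarith [h7, mul_nonneg (sq_nonneg M) hDpos.le]
  -- conclude
  have hsD : 0 < Real.sqrt (D:ℝ) := Real.sqrt_pos.mpr hDpos
  rw [le_div_iff₀ hsD]
  have hsq : (|φ v| * Real.sqrt (D:ℝ))^2 ≤ 16 := by
    have h1 : Real.sqrt (D:ℝ)^2 = (D:ℝ) := Real.sq_sqrt hDpos.le
    calc (|φ v| * Real.sqrt (D:ℝ))^2 = M^2 * (Real.sqrt (D:ℝ))^2 := by rw [hM]; ring
      _ = M^2 * (D:ℝ) := by rw [h1]
      _ ≤ 16 := key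
  nlinarith [hsq, mul_nonneg hMnn hsD.le]
end
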